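/- arXiv:1811.04800 — 4 statements merged into one kernel-verified Lean document; each statement's English description precedes it below -/
import Mathlib

section
/- Two epistemic logic programs over the same finite atom domain and epistemic-literal domain are strongly equivalent (i.e., strongly ELP-CWV-equivalent) if and only if they have the same SE-function. -/
variable {V : Type}

/-- A (default-negation) literal: an atom or its default negation. -/
inductive Lit (V : Type) : Type
  | pos (a : V) : Lit V
  | neg (a : V) : Lit V

namespace Lit

/-- `I ⊨ ℓ`. -/
def sat (I : Set V) : Lit V → Prop
  | pos a => a ∈ I
  | neg a => a ∉ I

/-- The complementary literal (so that `I ⊨ ¬ℓ` iff `I ⊨ ℓ.flip`). -/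
def flip : Lit V → Lit V
  | pos a => neg a
  | neg a => pos a

/-- The underlying atom of a literal. -/
def atom : Lit V → V
  | pos a => a
  | neg a => a

end Lit

/-- A standard (ASP) rule `head ← pos, {¬ℓ | ℓ ∈ neg}`; the set `neg` collects the
literals occurring under one extra default negation in the body (so an atom `a ∈ pos`
is a positive body atom, `Lit.pos c ∈ neg` encodes the body element `¬c`, and
`Lit.neg d ∈ neg` encodes the doubly negated body element `¬¬d`). -/
structure Rule (V : Type) : Type where
  head : Set V
  pos : Set V
  neg : Set (Lit V)

namespace Rule

/-- The rule only uses atoms from `A`. -/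
def wf (r : Rule V) (A : Set V) : Prop :=
  r.head ⊆ A ∧ r.pos ⊆ A ∧ ∀ ℓ ∈ r.neg, ℓ.atom ∈ A

/-- `I` is a model of the rule. -/
def sat (I : Set V) (r : Rule V) : Prop :=
  (r.pos ⊆ I ∧ ∀ ℓ ∈ r.neg, ¬ ℓ.sat I) → ∃ a ∈ r.head, a ∈ I

/-- `X` satisfies the GL-reduct of the rule w.r.t. `Y`: if the rule survives the
reduct (no negated body literal is satisfied by `Y`), then `X` satisfies the
remaining rule `head ← pos`. -/
def redSat (Y X : Set V) (r : Rule V) : Prop :=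
  (∀ ℓ ∈ r.neg, ¬ ℓ.sat Y) → (r.pos ⊆ X → ∃ a ∈ r.head, a ∈ X)

end Rule

/-- A ground logic program `(𝒜, ℛ)`. -/
structure Program (V : Type) : Type where
  A : Set V
  R : Set (Rule V)

namespace Program

def wf (P : Program V) : Prop := ∀ r ∈ P.R, r.wf P.A

/-- `I ⊨ P`. -/
def model (P : Program V) (I : Set V) : Prop := ∀ r ∈ P.R, r.sat I

/-- `X ⊨ P^Y` (the GL-reduct). -/
def redModel (P : Program V) (Y X : Set V) : Prop := ∀ r ∈ P.R, r.redSat Y X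

/-- `M` is an answer set of `P`. -/
def answerSet (P : Program V) (M : Set V) : Prop :=
  M ⊆ P.A ∧ P.model M ∧ ¬ ∃ M', M' ⊂ M ∧ P.redModel M M'

/-- `AS(P)`, the set of answer sets. -/
def AS (P : Program V) : Set (Set V) := {M | P.answerSet M}

/-- The set of SE-models `(X,Y)` with `X ⊆ Y ⊆ 𝒜`, `Y ⊨ P` and `X ⊨ P^Y`. -/
def SE (P : Program V) : Set (Set V × Set V) :=
  {p | p.1 ⊆ p.2 ∧ p.2 ⊆ P.A ∧ P.model p.2 ∧ P.redModel p.2 p.1}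

/-- Componentwise union of programs. -/
def union (P₁ P₂ : Program V) : Program V := ⟨P₁.A ∪ P₂.A, P₁.R ∪ P₂.R⟩

/-- Strong equivalence of plain logic programs. -/
def strongEq (P₁ P₂ : Program V) : Prop :=
  ∀ P : Program V, P.wf → (P₁.union P).AS = (P₂.union P).AS

end Program

/-- An ELP rule `head ← opos, ¬oneg, not epos, ¬ not eneg`: epistemic literals `not ℓ`
are identified with the literal `ℓ` they negate; `epos` collects the literals occurring
under plain epistemic negation and `eneg` those occurring under default-negated
epistemic negation. -/
structure ERule (V : Type) : Type where
  head : Set V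
  opos : Set V
  oneg : Set (Lit V)
  epos : Set (Lit V)
  eneg : Set (Lit V)

namespace ERule

/-- The rule only uses atoms from `A` and epistemic literals from `E`. -/
def wf (r : ERule V) (A : Set V) (E : Set (Lit V)) : Prop :=
  r.head ⊆ A ∧ r.opos ⊆ A ∧ (∀ ℓ ∈ r.oneg, ℓ.atom ∈ A) ∧ r.epos ⊆ E ∧ r.eneg ⊆ E

/-- The rule of the epistemic reduct w.r.t. guess `Φ` (meaningful when no `eneg`
literal belongs to `Φ`, in which case: epistemic literals `not ℓ ∈ Φ` become `⊤`,
the remaining `not ℓ` in `epos` become `¬ℓ`, and `¬ not ℓ` in `eneg` becomes `¬¬ℓ`,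
i.e. `¬(ℓ.flip)`, reading triple negations as single ones). -/
def reduct (r : ERule V) (Φ : Set (Lit V)) : Rule V :=
  ⟨r.head, r.opos, r.oneg ∪ (r.epos \ Φ) ∪ (Lit.flip '' r.eneg)⟩

/-- The underlying plain rule of an epistemic-negation-free ELP rule. -/
def toRule (r : ERule V) : Rule V := ⟨r.head, r.opos, r.oneg⟩

end ERule

/-- A plain rule viewed as an ELP rule. -/
def Rule.toERule (r : Rule V) : ERule V := ⟨r.head, r.pos, r.neg, ∅, ∅⟩

/-- An epistemic logic program `(𝒜, ℰ, ℛ)`. -/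
structure ELP (V : Type) : Type where
  A : Set V
  E : Set (Lit V)
  R : Set (ERule V)

/-- `I` is `Φ`-compatible w.r.t. `E`. -/
def compatible (E Φ : Set (Lit V)) (I : Set (Set V)) : Prop :=
  I.Nonempty ∧ (∀ ℓ ∈ Φ, ∃ J ∈ I, ¬ ℓ.sat J) ∧ (∀ ℓ ∈ E \ Φ, ∀ J ∈ I, ℓ.sat J)

/-- `Φ` is realizable in the set `I` of interpretations (w.r.t. `E`). -/
def realizableIn (E Φ : Set (Lit V)) (I : Set (Set V)) : Prop :=
  ∃ I', I' ⊆ I ∧ compatible E Φ I'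

/-- A guess `Φ` is consistent w.r.t. `E`: whenever `E` contains both `not a` and
`not ¬a`, `Φ` contains at least one of them. -/
def consistentGuess (E Φ : Set (Lit V)) : Prop :=
  ∀ a : V, Lit.pos a ∈ E → Lit.neg a ∈ E → (Lit.pos a ∈ Φ ∨ Lit.neg a ∈ Φ)

namespace ELP

/-- Well-formedness: `E` consists of epistemic literals over `A`, and every rule is
over `A` and `E`. -/
def wf (P : ELP V) : Prop :=
  (∀ ℓ ∈ P.E, ℓ.atom ∈ P.A) ∧ ∀ r ∈ P.R, r.wf P.A P.E

/-- An epistemic-negation-free (plain ASP) program viewed as an ELP. -/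
def isASP (P : ELP V) : Prop := P.E = ∅ ∧ ∀ r ∈ P.R, r.epos = ∅ ∧ r.eneg = ∅

/-- Componentwise union of ELPs. -/
def union (P₁ P₂ : ELP V) : ELP V := ⟨P₁.A ∪ P₂.A, P₁.E ∪ P₂.E, P₁.R ∪ P₂.R⟩

/-- The epistemic reduct `P^Φ`: rules with some `eneg` literal in `Φ` are deleted
(their body contains `¬⊤`), the remaining rules are reduced. -/
def eReduct (P : ELP V) (Φ : Set (Lit V)) : Program V :=
  ⟨P.A, {q | ∃ r ∈ P.R, (∀ ℓ ∈ r.eneg, ℓ ∉ Φ) ∧ q = r.reduct Φ}⟩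

/-- `M` is a candidate world view of `P` w.r.t. the guess `Φ`. -/
def isCWVwrt (P : ELP V) (Φ : Set (Lit V)) (M : Set (Set V)) : Prop :=
  Φ ⊆ P.E ∧ M = (P.eReduct Φ).AS ∧ compatible P.E Φ M

/-- `M` is a candidate world view of `P`. -/
def isCWV (P : ELP V) (M : Set (Set V)) : Prop := ∃ Φ, P.isCWVwrt Φ M

/-- `M` is a world view of `P`: a CWV whose associated guess is subset-maximal. -/
def isWV (P : ELP V) (M : Set (Set V)) : Prop :=
  ∃ Φ, P.isCWVwrt Φ M ∧ ∀ Φ' M', P.isCWVwrt Φ' M' → ¬ Φ ⊂ Φ'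

/-- `Φ` is realizable in `P`: realizable in the set of models of `P^Φ`. -/
def realizable (P : ELP V) (Φ : Set (Lit V)) : Prop :=
  realizableIn P.E Φ {I | I ⊆ P.A ∧ (P.eReduct Φ).model I}

/-- The SE-function of `P`: `SE(Π^Φ)` if `Φ` is realizable in `P`, and `∅` otherwise. -/
def SEfun (P : ELP V) (Φ : Set (Lit V)) : Set (Set V × Set V) :=
  {p | P.realizable Φ ∧ p ∈ (P.eReduct Φ).SE}

/-- CWV-equivalence. -/
def cwvEq (P₁ P₂ : ELP V) : Prop := ∀ M, P₁.isCWV M ↔ P₂.isCWV M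

/-- WV-equivalence. -/
def wvEq (P₁ P₂ : ELP V) : Prop := ∀ M, P₁.isWV M ↔ P₂.isWV M

/-- Strong ELP-CWV-equivalence. -/
def strongELPCWVEq (P₁ P₂ : ELP V) : Prop :=
  ∀ Q : ELP V, Q.wf → cwvEq (P₁.union Q) (P₂.union Q)

/-- Strong ELP-WV-equivalence. -/
def strongELPWVEq (P₁ P₂ : ELP V) : Prop :=
  ∀ Q : ELP V, Q.wf → wvEq (P₁.union Q) (P₂.union Q)

/-- Strong ASP-CWV-equivalence. -/
def strongASPCWVEq (P₁ P₂ : ELP V) : Prop :=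
  ∀ Q : ELP V, Q.wf → Q.isASP → cwvEq (P₁.union Q) (P₂.union Q)

/-- Strong ASP-WV-equivalence. -/
def strongASPWVEq (P₁ P₂ : ELP V) : Prop :=
  ∀ Q : ELP V, Q.wf → Q.isASP → wvEq (P₁.union Q) (P₂.union Q)

end ELP

/-- The Gelfond-CWA program `p' ← ¬ not ¬p` over `𝒜 = {p, p'}`, `ℰ = {not p, not ¬p}`. -/
def GelfondCWA (p p' : V) : ELP V :=
  ⟨{p, p'}, {Lit.pos p, Lit.neg p}, {⟨{p'}, ∅, ∅, ∅, {Lit.neg p}⟩}⟩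

/-- The Shen-Eiter-CWA program `p' ← not p` over `𝒜 = {p, p'}`, `ℰ = {not p, not ¬p}`. -/
def ShenEiterCWA (p p' : V) : ELP V :=
  ⟨{p, p'}, {Lit.pos p, Lit.neg p}, {⟨{p'}, ∅, ∅, {Lit.pos p}, ∅⟩}⟩


namespace SEaux

variable {V : Type}

lemma lit_sat_inter {A I : Set V} {ℓ : Lit V} (h : ℓ.atom ∈ A) : ℓ.sat (I ∩ A) ↔ ℓ.sat I := by
  cases ℓ with
  | pos a =>
    simp only [Lit.atom] at h
    simp only [Lit.sat, Set.mem_inter_iff]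
    exact and_iff_left h
  | neg a =>
    simp only [Lit.atom] at h
    simp only [Lit.sat, Set.mem_inter_iff]
    tauto

lemma rule_sat_inter {A : Set V} {r : Rule V} (hr : r.wf A) (I : Set V) :
    r.sat (I ∩ A) ↔ r.sat I := by
  obtain ⟨hh, hp, hn⟩ := hr
  unfold Rule.sat
  constructor
  · rintro h ⟨h1, h2⟩
    obtain ⟨a, ha, hai⟩ := h ⟨fun x hx => ⟨h1 hx, hp hx⟩,
      fun ℓ hℓ => by rw [lit_sat_inter (hn ℓ hℓ)]; exact h2 ℓ hℓ⟩
    exact ⟨a, ha, hai.1⟩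
  · rintro h ⟨h1, h2⟩
    obtain ⟨a, ha, hai⟩ := h ⟨fun x hx => (h1 hx).1,
      fun ℓ hℓ => by rw [← lit_sat_inter (hn ℓ hℓ)]; exact h2 ℓ hℓ⟩
    exact ⟨a, ha, hai, hh ha⟩

lemma rule_redSat_inter {A : Set V} {r : Rule V} (hr : r.wf A) (Y X : Set V) :
    r.redSat (Y ∩ A) (X ∩ A) ↔ r.redSat Y X := by
  obtain ⟨hh, hp, hn⟩ := hr
  unfold Rule.redSat
  constructor
  · intro h h1 h2
    obtain ⟨a, ha, hai⟩ := h (fun ℓ hℓ => by rw [lit_sat_inter (hn ℓ hℓ)]; exact h1 ℓ hℓ)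
      (fun x hx => ⟨h2 hx, hp hx⟩)
    exact ⟨a, ha, hai.1⟩
  · intro h h1 h2
    obtain ⟨a, ha, hai⟩ := h (fun ℓ hℓ => by rw [← lit_sat_inter (hn ℓ hℓ)]; exact h1 ℓ hℓ)
      (fun x hx => (h2 hx).1)
    exact ⟨a, ha, hai, hh ha⟩

lemma prog_model_inter {P : Program V} (hw : P.wf) (I : Set V) :
    P.model (I ∩ P.A) ↔ P.model I := by
  constructor <;> intro h r hr
  · exact (rule_sat_inter (hw r hr) I).mp (h r hr)
  · exact (rule_sat_inter (hw r hr) I).mpr (h r hr)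

lemma prog_redModel_inter {P : Program V} (hw : P.wf) (Y X : Set V) :
    P.redModel (Y ∩ P.A) (X ∩ P.A) ↔ P.redModel Y X := by
  constructor <;> intro h r hr
  · exact (rule_redSat_inter (hw r hr) Y X).mp (h r hr)
  · exact (rule_redSat_inter (hw r hr) Y X).mpr (h r hr)

lemma redModel_self_iff (P : Program V) (I : Set V) : P.redModel I I ↔ P.model I := by
  constructor <;> intro h r hr
  · intro ⟨h1, h2⟩; exact h r hr h2 h1
  · intro h1 h2; exact h r hr ⟨h2, h1⟩

lemma diag_SE {P : Program V} {Y : Set V} : (Y, Y) ∈ P.SE ↔ Y ⊆ P.A ∧ P.model Y := by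
  constructor
  · rintro ⟨_, h2, h3, _⟩; exact ⟨h2, h3⟩
  · rintro ⟨h1, h2⟩
    exact ⟨subset_rfl, h1, h2, (redModel_self_iff P Y).mpr h2⟩


lemma turner_incl {G₁ G₂ H : Program V} (hA : G₁.A = G₂.A)
    (hw₁ : G₁.wf) (hw₂ : G₂.wf) (hSE : G₁.SE = G₂.SE) :
    (G₁.union H).AS ⊆ (G₂.union H).AS := by
  intro M hM
  obtain ⟨hMA, hMmod, hMmin⟩ := hM
  set A := G₁.A with hAdef
  have hMG₁ : G₁.model M := fun r hr => hMmod r (Or.inl hr)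
  have hMH : H.model M := fun r hr => hMmod r (Or.inr hr)
  have hdiag1 : (M ∩ A, M ∩ A) ∈ G₁.SE :=
    diag_SE.mpr ⟨Set.inter_subset_right, (prog_model_inter hw₁ M).mpr hMG₁⟩
  have hdiag2 := hSE ▸ hdiag1
  have hMG₂A : G₂.model (M ∩ A) := (diag_SE.mp hdiag2).2
  have hMG₂ : G₂.model M := by
    have := (prog_model_inter hw₂ M)
    rw [← hA] at this
    exact this.mp hMG₂A
  refine ⟨?_, ?_, ?_⟩
  · intro x hx
    rcases hMA hx with h | h
    · exact Or.inl (hA ▸ h)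
    · exact Or.inr h
  · intro r hr
    rcases hr with hr | hr
    · exact hMG₂ r hr
    · exact hMH r hr
  · rintro ⟨M', hM'sub, hM'red⟩
    apply hMmin
    refine ⟨M', hM'sub, ?_⟩
    have hM'G₂ : G₂.redModel M M' := fun r hr => hM'red r (Or.inl hr)
    have hM'H : H.redModel M M' := fun r hr => hM'red r (Or.inr hr)
    have hred2 : G₂.redModel (M ∩ A) (M' ∩ A) := by
      intro r hr
      have := (rule_redSat_inter (hw₂ r hr) M M')
      rw [← hA] at this
      exact this.mpr (hM'G₂ r hr)
    have hse2 : (M' ∩ A, M ∩ A) ∈ G₂.SE := by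
      refine ⟨Set.inter_subset_inter_left A hM'sub.subset, ?_, hMG₂A, hred2⟩
      rw [← hA]; exact Set.inter_subset_right
    have hse1 : (M' ∩ A, M ∩ A) ∈ G₁.SE := hSE ▸ hse2
    have hred1 : G₁.redModel (M ∩ A) (M' ∩ A) := hse1.2.2.2
    intro r hr
    rcases hr with hr | hr
    · exact (rule_redSat_inter (hw₁ r hr) M M').mp (hred1 r hr)
    · exact hM'H r hr

lemma turner {G₁ G₂ H : Program V} (hA : G₁.A = G₂.A)
    (hw₁ : G₁.wf) (hw₂ : G₂.wf) (hSE : G₁.SE = G₂.SE) :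
    (G₁.union H).AS = (G₂.union H).AS :=
  Set.Subset.antisymm (turner_incl hA hw₁ hw₂ hSE)
    (turner_incl hA.symm hw₂ hw₁ hSE.symm)


lemma flip_atom (ℓ : Lit V) : ℓ.flip.atom = ℓ.atom := by cases ℓ <;> rfl

lemma toERule_reduct (r : Rule V) (Φ : Set (Lit V)) : (Rule.toERule r).reduct Φ = r := by
  simp [Rule.toERule, ERule.reduct]

lemma plain_eReduct (B : Set V) (S : Set (Rule V)) (Φ : Set (Lit V)) :
    (ELP.mk B ∅ (Rule.toERule '' S)).eReduct Φ = ⟨B, S⟩ := by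
  unfold ELP.eReduct
  congr 1
  ext q
  constructor
  · rintro ⟨er, ⟨r, hr, rfl⟩, _, rfl⟩
    rw [toERule_reduct]; exact hr
  · intro hq
    refine ⟨Rule.toERule q, ⟨q, hq, rfl⟩, ?_, (toERule_reduct q Φ).symm⟩
    intro ℓ hℓ
    exact absurd hℓ (by simp [Rule.toERule])

lemma eReduct_wf {P : ELP V} (hw : P.wf) (Φ : Set (Lit V)) : (P.eReduct Φ).wf := by
  rintro q ⟨r, hr, _, rfl⟩
  obtain ⟨hh, hop, hon, hep, hen⟩ := hw.2 r hr
  refine ⟨hh, hop, ?_⟩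
  rintro ℓ (⟨hℓ | hℓ⟩ | ⟨ℓ', hℓ', rfl⟩)
  · exact hon ℓ hℓ
  · exact hw.1 ℓ (hep hℓ.1)
  · rw [flip_atom]; exact hw.1 ℓ' (hen hℓ')

lemma eReduct_inter {P : ELP V} (hw : P.wf) (Φ : Set (Lit V)) :
    P.eReduct Φ = P.eReduct (Φ ∩ P.E) := by
  unfold ELP.eReduct
  congr 1
  ext q
  constructor
  · rintro ⟨r, hr, hdel, rfl⟩
    obtain ⟨hh, hop, hon, hep, hen⟩ := hw.2 r hr
    refine ⟨r, hr, fun ℓ hℓ h => hdel ℓ hℓ h.1, ?_⟩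
    unfold ERule.reduct
    congr 1
    ext ℓ
    simp only [Set.mem_union, Set.mem_diff, Set.mem_inter_iff]
    constructor
    · rintro ((h | ⟨h1, h2⟩) | h)
      · exact Or.inl (Or.inl h)
      · exact Or.inl (Or.inr ⟨h1, fun hc => h2 hc.1⟩)
      · exact Or.inr h
    · rintro ((h | ⟨h1, h2⟩) | h)
      · exact Or.inl (Or.inl h)
      · exact Or.inl (Or.inr ⟨h1, fun hc => h2 ⟨hc, hep h1⟩⟩)
      · exact Or.inr h
  · rintro ⟨r, hr, hdel, rfl⟩
    obtain ⟨hh, hop, hon, hep, hen⟩ := hw.2 r hr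
    refine ⟨r, hr, fun ℓ hℓ h => hdel ℓ hℓ ⟨h, hen hℓ⟩, ?_⟩
    unfold ERule.reduct
    congr 1
    ext ℓ
    simp only [Set.mem_union, Set.mem_diff, Set.mem_inter_iff]
    constructor
    · rintro ((h | ⟨h1, h2⟩) | h)
      · exact Or.inl (Or.inl h)
      · exact Or.inl (Or.inr ⟨h1, fun hc => h2 ⟨hc, hep h1⟩⟩)
      · exact Or.inr h
    · rintro ((h | ⟨h1, h2⟩) | h)
      · exact Or.inl (Or.inl h)
      · exact Or.inl (Or.inr ⟨h1, fun hc => h2 hc.1⟩)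
      · exact Or.inr h

lemma eReduct_union (P Q : ELP V) (Φ : Set (Lit V)) :
    (P.union Q).eReduct Φ = (P.eReduct Φ).union (Q.eReduct Φ) := by
  unfold ELP.eReduct ELP.union Program.union
  congr 1
  ext q
  constructor
  · rintro ⟨r, (hr | hr), hdel, rfl⟩
    · exact Or.inl ⟨r, hr, hdel, rfl⟩
    · exact Or.inr ⟨r, hr, hdel, rfl⟩
  · rintro (⟨r, hr, hdel, rfl⟩ | ⟨r, hr, hdel, rfl⟩)
    · exact ⟨r, Or.inl hr, hdel, rfl⟩
    · exact ⟨r, Or.inr hr, hdel, rfl⟩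


lemma realizable_inter {P : ELP V} (hw : P.wf) {Φ : Set (Lit V)} (h : P.realizable Φ) :
    P.realizable (Φ ∩ P.E) := by
  obtain ⟨I', hsub, h1, h2, h3⟩ := h
  have hset : {I | I ⊆ P.A ∧ (P.eReduct (Φ ∩ P.E)).model I}
      = {I | I ⊆ P.A ∧ (P.eReduct Φ).model I} := by rw [← eReduct_inter hw]
  refine ⟨I', by rw [hset]; exact hsub, h1, fun ℓ hℓ => h2 ℓ hℓ.1, ?_⟩
  intro ℓ hℓ
  exact h3 ℓ ⟨hℓ.1, fun h => hℓ.2 ⟨h, hℓ.1⟩⟩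

lemma modelset_eq_of_SE_eq {G₁ G₂ : Program V} (hA : G₁.A = G₂.A) (hSE : G₁.SE = G₂.SE) :
    {I | I ⊆ G₁.A ∧ G₁.model I} = {I | I ⊆ G₂.A ∧ G₂.model I} := by
  ext I
  simp only [Set.mem_setOf_eq]
  rw [← diag_SE, ← diag_SE, hSE]

lemma realizable_congr {A : Set V} {E : Set (Lit V)} {R₁ R₂ : Set (ERule V)}
    (hwf₁ : (ELP.mk A E R₁).wf) (hwf₂ : (ELP.mk A E R₂).wf) {Φ : Set (Lit V)}
    (hSE : ((ELP.mk A E R₁).eReduct (Φ ∩ E)).SE = ((ELP.mk A E R₂).eReduct (Φ ∩ E)).SE) :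
    (ELP.mk A E R₁).realizable Φ ↔ (ELP.mk A E R₂).realizable Φ := by
  have h1 := eReduct_inter hwf₁ Φ
  have h2 := eReduct_inter hwf₂ Φ
  have hset : {I : Set V | I ⊆ A ∧ ((ELP.mk A E R₁).eReduct Φ).model I}
      = {I : Set V | I ⊆ A ∧ ((ELP.mk A E R₂).eReduct Φ).model I} := by
    rw [h1, h2]
    exact modelset_eq_of_SE_eq (G₁ := (ELP.mk A E R₁).eReduct (Φ ∩ E))
      (G₂ := (ELP.mk A E R₂).eReduct (Φ ∩ E)) rfl hSE
  constructor <;> rintro ⟨I', hsub, hc⟩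
  · exact ⟨I', by rw [← hset]; exact hsub, hc⟩
  · exact ⟨I', by rw [hset]; exact hsub, hc⟩


lemma SE_nonempty_of_realizable {P : ELP V} {Φ : Set (Lit V)} (h : P.realizable Φ) :
    ((P.eReduct Φ).SE).Nonempty := by
  obtain ⟨I', hsub, ⟨I₀, hI₀⟩, -, -⟩ := h
  obtain ⟨hIA, hImod⟩ := hsub hI₀
  exact ⟨(I₀, I₀), diag_SE.mpr ⟨hIA, hImod⟩⟩

lemma SEfun_eq_SE_of_realizable {P : ELP V} {Φ : Set (Lit V)} (h : P.realizable Φ) :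
    P.SEfun Φ = (P.eReduct Φ).SE := by
  ext p; exact and_iff_right h

lemma SEfun_empty {P : ELP V} {Φ : Set (Lit V)} (h : ¬ P.realizable Φ) : P.SEfun Φ = ∅ := by
  ext p; simp only [ELP.SEfun, Set.mem_setOf_eq, Set.mem_empty_iff_false, iff_false]
  exact fun hc => h hc.1

lemma dichotomy {A : Set V} {E : Set (Lit V)} {R₁ R₂ : Set (ERule V)}
    (hwf₁ : (ELP.mk A E R₁).wf) (hwf₂ : (ELP.mk A E R₂).wf) {Φ : Set (Lit V)}
    (hne : (ELP.mk A E R₁).SEfun Φ ≠ (ELP.mk A E R₂).SEfun Φ) :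
    ((ELP.mk A E R₁).eReduct (Φ ∩ E)).SE ≠ ((ELP.mk A E R₂).eReduct (Φ ∩ E)).SE ∧
      ((ELP.mk A E R₁).realizable (Φ ∩ E) ∨ (ELP.mk A E R₂).realizable (Φ ∩ E)) := by
  constructor
  · intro hSE
    apply hne
    have hr := realizable_congr hwf₁ hwf₂ hSE
    by_cases h : (ELP.mk A E R₁).realizable Φ
    · rw [SEfun_eq_SE_of_realizable h, SEfun_eq_SE_of_realizable (hr.mp h),
        eReduct_inter hwf₁, eReduct_inter hwf₂]
      exact hSE
    · rw [SEfun_empty h, SEfun_empty (fun hh => h (hr.mpr hh))]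
  · by_contra hcon
    push_neg at hcon
    apply hne
    rw [SEfun_empty (fun hh => hcon.1 (realizable_inter hwf₁ hh)),
      SEfun_empty (fun hh => hcon.2 (realizable_inter hwf₂ hh))]

lemma guess_unique {E Ψ Φ' : Set (Lit V)} {M : Set (Set V)} (hΨE : Ψ ⊆ E) (hΦE : Φ' ⊆ E)
    (h1 : compatible E Ψ M) (h2 : compatible E Φ' M) : Ψ = Φ' := by
  ext ℓ
  constructor
  · intro hℓ
    by_contra hℓ'
    obtain ⟨J, hJ, hJs⟩ := h1.2.1 ℓ hℓ
    exact hJs (h2.2.2 ℓ ⟨hΨE hℓ, hℓ'⟩ J hJ)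
  · intro hℓ
    by_contra hℓ'
    obtain ⟨J, hJ, hJs⟩ := h2.2.1 ℓ hℓ
    exact hJs (h1.2.2 ℓ ⟨hΦE hℓ, hℓ'⟩ J hJ)

lemma distinguish {A B : Set V} {E : Set (Lit V)} {R₁ R₂ : Set (ERule V)} {S : Set (Rule V)}
    {Ψ : Set (Lit V)} (hΨE : Ψ ⊆ E)
    (hcompat : compatible E Ψ (((ELP.mk A E R₁).union ⟨B, ∅, Rule.toERule '' S⟩).eReduct Ψ).AS)
    (hne : (((ELP.mk A E R₂).union ⟨B, ∅, Rule.toERule '' S⟩).eReduct Ψ).AS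
        ≠ (((ELP.mk A E R₁).union ⟨B, ∅, Rule.toERule '' S⟩).eReduct Ψ).AS) :
    ¬ ELP.cwvEq ((ELP.mk A E R₁).union ⟨B, ∅, Rule.toERule '' S⟩)
        ((ELP.mk A E R₂).union ⟨B, ∅, Rule.toERule '' S⟩) := by
  intro h
  set Q : ELP V := ⟨B, ∅, Rule.toERule '' S⟩ with hQ
  have hEeq : ((ELP.mk A E R₁).union Q).E = E := Set.union_empty E
  have hEeq2 : ((ELP.mk A E R₂).union Q).E = E := Set.union_empty E
  set M := (((ELP.mk A E R₁).union Q).eReduct Ψ).AS with hM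
  have h1 : ((ELP.mk A E R₁).union Q).isCWV M := by
    refine ⟨Ψ, ?_, rfl, ?_⟩
    · rw [hEeq]; exact hΨE
    · rw [hEeq]; exact hcompat
  obtain ⟨Φ', hΦ'E, hAS', hcomp'⟩ := (h M).mp h1
  rw [hEeq2] at hΦ'E hcomp'
  have := guess_unique hΨE hΦ'E hcompat hcomp'
  rw [← this] at hAS'
  exact hne hAS'.symm


lemma tag_inter {A Y : Set V} {t : V} (hY : Y ⊆ A) (ht : t ∉ A) : (Y ∪ {t}) ∩ A = Y := by
  ext x
  simp only [Set.mem_inter_iff, Set.mem_union, Set.mem_singleton_iff]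
  constructor
  · rintro ⟨hx | rfl, hxA⟩
    · exact hx
    · exact absurd hxA ht
  · intro hx
    exact ⟨Or.inl hx, hY hx⟩

def QR (A : Set V) (F : Set (V × Set V × Set V)) : Set (Rule V) :=
  {r | ∃ p ∈ F, r = ⟨{p.1}, ∅, Lit.pos '' ((Prod.fst '' F) \ {p.1})⟩} ∪
  {r | ∃ p ∈ F, ∃ q ∈ F, p.1 ≠ q.1 ∧ r = ⟨∅, {p.1, q.1}, ∅⟩} ∪
  {r | ∃ p ∈ F, ∃ x ∈ p.2.1, r = ⟨{x}, {p.1}, ∅⟩} ∪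
  {r | ∃ p ∈ F, ∃ x ∈ p.2.2 \ p.2.1, ∃ y ∈ p.2.2 \ p.2.1, r = ⟨{x}, {y, p.1}, ∅⟩} ∪
  {r | ∃ p ∈ F, ∃ a ∈ A \ p.2.2, r = ⟨∅, {p.1, a}, ∅⟩} ∪
  {r | ∃ p ∈ F, ∃ x ∈ p.2.2 \ p.2.1, r = ⟨∅, {p.1}, {Lit.pos x}⟩}

theorem gadget_AS {A : Set V} {F : Set (V × Set V × Set V)} {G : Program V}
    (hGA : G.A = A) (hGwf : G.wf)
    (hF1 : ∀ p ∈ F, p.2.1 ⊆ p.2.2 ∧ p.2.2 ⊆ A ∧ p.1 ∉ A)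
    (hF2 : ∀ p ∈ F, ∀ q ∈ F, p.1 = q.1 → p = q)
    (hF3 : F.Nonempty) :
    (G.union ⟨A ∪ Prod.fst '' F, QR A F⟩).AS =
      {M | ∃ p ∈ F, M = p.2.2 ∪ {p.1} ∧ G.model p.2.2 ∧
        (p.2.1 = p.2.2 ∨ ¬ G.redModel p.2.2 p.2.1)} := by
  have hGwf' : ∀ r ∈ G.R, r.wf A := by rw [← hGA]; exact hGwf
  apply Set.Subset.antisymm
  · -- AS ⊆ described set
    rintro M ⟨hMA, hmod, hmin⟩
    have hQmod : ∀ r ∈ QR A F, r.sat M := fun r hr => hmod r (Or.inr hr)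
    -- step 1 : some tag in M
    have hex : ∃ q ∈ F, q.1 ∈ M := by
      by_contra hcon
      push_neg at hcon
      obtain ⟨p₀, hp₀⟩ := hF3
      have hc : (⟨{p₀.1}, ∅, Lit.pos '' ((Prod.fst '' F) \ {p₀.1})⟩ : Rule V) ∈ QR A F :=
        Or.inl (Or.inl (Or.inl (Or.inl (Or.inl ⟨p₀, hp₀, rfl⟩))))
      have hnegc : ∀ ℓ ∈ Lit.pos '' ((Prod.fst '' F) \ {p₀.1}), ¬ ℓ.sat M := by
        rintro ℓ ⟨t', ⟨⟨q, hq, rfl⟩, -⟩, rfl⟩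
        exact hcon q hq
      obtain ⟨a, ha, haM⟩ := hQmod _ hc ⟨fun x hx => absurd hx (Set.notMem_empty x), hnegc⟩
      exact hcon p₀ hp₀ (by rwa [show a = p₀.1 from ha] at haM)
    obtain ⟨p, hp, htM⟩ := hex
    obtain ⟨t, X, Y⟩ := p
    obtain ⟨hXY, hYA, htA⟩ := hF1 _ hp
    -- step 2 : tag unique
    have huniq : ∀ q ∈ F, q.1 ∈ M → q = (t, X, Y) := by
      intro q hq hqM
      by_contra hne
      have hne1 : q.1 ≠ t := fun h => hne (hF2 q hq _ hp h)
      have hc : (⟨∅, {q.1, t}, ∅⟩ : Rule V) ∈ QR A F :=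
        Or.inl (Or.inl (Or.inl (Or.inl (Or.inr ⟨q, hq, ⟨t, X, Y⟩, hp, hne1, rfl⟩))))
      have hposc : ({q.1, t} : Set V) ⊆ M := by
        rintro x (rfl | rfl)
        · exact hqM
        · exact htM
      obtain ⟨a, ha, -⟩ := hQmod _ hc ⟨hposc, fun ℓ hℓ => absurd hℓ (Set.notMem_empty ℓ)⟩
      exact absurd ha (Set.notMem_empty a)
    -- step 3 : M = Y ∪ {t}
    have hXM : X ⊆ M := by
      intro x hx
      have hc : (⟨{x}, {t}, ∅⟩ : Rule V) ∈ QR A F :=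
        Or.inl (Or.inl (Or.inl (Or.inr ⟨⟨t, X, Y⟩, hp, x, hx, rfl⟩)))
      obtain ⟨a, ha, haM⟩ := hQmod _ hc
        ⟨by rintro y rfl; exact htM, fun ℓ hℓ => absurd hℓ (Set.notMem_empty ℓ)⟩
      rwa [show a = x from ha] at haM
    have hYXM : Y \ X ⊆ M := by
      intro x hx
      by_contra hxM
      have hc : (⟨∅, {t}, {Lit.pos x}⟩ : Rule V) ∈ QR A F :=
        Or.inr ⟨⟨t, X, Y⟩, hp, x, hx, rfl⟩
      obtain ⟨a, ha, -⟩ := hQmod _ hc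
        ⟨by rintro y rfl; exact htM, by rintro ℓ rfl; exact hxM⟩
      exact absurd ha (Set.notMem_empty a)
    have hMAY : M ∩ A ⊆ Y := by
      rintro a ⟨haM, haA⟩
      by_contra haY
      have hc : (⟨∅, {t, a}, ∅⟩ : Rule V) ∈ QR A F :=
        Or.inl (Or.inr ⟨⟨t, X, Y⟩, hp, a, ⟨haA, haY⟩, rfl⟩)
      obtain ⟨b, hb, -⟩ := hQmod _ hc
        ⟨by rintro y hy; rcases hy with rfl | rfl; exacts [htM, haM],
          fun ℓ hℓ => absurd hℓ (Set.notMem_empty ℓ)⟩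
      exact absurd hb (Set.notMem_empty b)
    have hMeq : M = Y ∪ {t} := by
      apply Set.Subset.antisymm
      · intro x hx
        rcases hMA hx with hxA | hxA
        · exact Or.inl (hMAY ⟨hx, hGA ▸ hxA⟩)
        · rcases hxA with hxA | ⟨q, hq, rfl⟩
          · exact Or.inl (hMAY ⟨hx, hxA⟩)
          · exact Or.inr (by rw [huniq q hq hx]; exact rfl)
      · rintro x (hx | rfl)
        · rcases Classical.em (x ∈ X) with h | h
          · exact hXM h
          · exact hYXM ⟨hx, h⟩
        · exact htM
    have hMiA : M ∩ A = Y := by rw [hMeq]; exact tag_inter hYA htA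
    have hGY : G.model Y := by
      intro r hr
      have h1 := (rule_sat_inter (hGwf' r hr) M)
      rw [hMiA] at h1
      exact h1.mpr (hmod r (Or.inl hr))
    refine ⟨(t, X, Y), hp, hMeq, hGY, ?_⟩
    by_contra hcon
    push_neg at hcon
    obtain ⟨hXnY, hredYX⟩ := hcon
    -- build the smaller model X ∪ {t}
    obtain ⟨y₀, hy₀Y, hy₀X⟩ := Set.exists_of_ssubset (ssubset_of_ne_of_subset hXnY hXY)
    apply hmin
    refine ⟨X ∪ {t}, ?_, ?_⟩
    · rw [hMeq]
      constructor
      · exact Set.union_subset_union_left _ hXY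
      · intro hsub
        rcases hsub (Or.inl hy₀Y) with h | h
        · exact hy₀X h
        · exact htA (Set.mem_singleton_iff.mp h ▸ hYA hy₀Y)
    · intro r hr
      have hXtA : (X ∪ {t}) ∩ A = X := tag_inter (hXY.trans hYA) htA
      have htagM' : ∀ q ∈ F, q.1 ∈ X ∪ {t} → q = (t, X, Y) := by
        rintro q hq (h | h)
        · exact absurd ((hXY.trans hYA) h) (hF1 q hq).2.2
        · exact hF2 q hq _ hp h
      rcases hr with hr | hr
      · -- G rules
        have h1 := rule_redSat_inter (hGwf' r hr) M (X ∪ {t})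
        rw [hMiA, hXtA] at h1
        exact h1.mp (hredYX r hr)
      · rcases hr with ((((hr | hr) | hr) | hr) | hr) | hr
        · -- choice
          obtain ⟨q, hq, rfl⟩ := hr
          rcases Classical.em (q.1 = t) with h | h
          · intro _ _
            exact ⟨q.1, rfl, Or.inr (by rw [h]; rfl)⟩
          · intro hneg _
            exact absurd (hneg (Lit.pos t) ⟨t, ⟨⟨(t, X, Y), hp, rfl⟩, fun hh => h (Set.mem_singleton_iff.mp hh).symm⟩, rfl⟩) (by simp only [Lit.sat]; exact fun hh => hh htM)
        · -- pairwise
          obtain ⟨q, hq, q', hq', hne, rfl⟩ := hr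
          intro _ hpos
          exfalso
          have h1 := htagM' q hq (hpos (Or.inl rfl))
          have h2 := htagM' q' hq' (hpos (Or.inr rfl))
          exact hne (by rw [h1, h2])
        · -- facts
          obtain ⟨q, hq, x, hx, rfl⟩ := hr
          intro _ hpos
          have h1 := htagM' q hq (hpos rfl)
          rw [h1] at hx
          exact ⟨x, rfl, Or.inl hx⟩
        · -- closure
          obtain ⟨q, hq, x, hx, y, hy, rfl⟩ := hr
          intro _ hpos
          exfalso
          have h1 := htagM' q hq (hpos (Or.inr rfl))
          rw [h1] at hy
          rcases hpos (Or.inl rfl) with h | h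
          · exact hy.2 h
          · exact htA (by rw [← show y = t from h]; exact hYA hy.1)
        · -- bound
          obtain ⟨q, hq, a, ha, rfl⟩ := hr
          intro _ hpos
          exfalso
          have h1 := htagM' q hq (hpos (Or.inl rfl))
          rw [h1] at ha
          rcases hpos (Or.inr rfl) with h | h
          · exact ha.2 (hXY h)
          · exact htA (by rw [← show a = t from h]; exact ha.1)
        · -- force
          obtain ⟨q, hq, x, hx, rfl⟩ := hr
          intro hneg hpos
          exfalso
          have h1 := htagM' q hq (hpos rfl)
          rw [h1] at hx
          have := hneg (Lit.pos x) rfl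
          exact this (by rw [hMeq]; exact Or.inl hx.1)
  · -- described set ⊆ AS
    rintro M ⟨⟨t, X, Y⟩, hp, rfl, hGY, hcond⟩
    obtain ⟨hXY, hYA, htA⟩ := hF1 _ hp
    have hMiA : (Y ∪ {t}) ∩ A = Y := tag_inter hYA htA
    have htagM : ∀ q ∈ F, q.1 ∈ Y ∪ {t} → q = (t, X, Y) := by
      rintro q hq (h | h)
      · exact absurd (hYA h) (hF1 q hq).2.2
      · exact hF2 q hq _ hp h
    refine ⟨?_, ?_, ?_⟩
    · rintro x (hx | rfl)
      · exact Or.inl (hGA ▸ hYA hx)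
      · exact Or.inr (Or.inr (Set.mem_image_of_mem Prod.fst hp))
    · intro r hr
      rcases hr with hr | hr
      · have h1 := (rule_sat_inter (hGwf' r hr) (Y ∪ {t}))
        rw [hMiA] at h1
        exact h1.mp (hGY r hr)
      · rcases hr with ((((hr | hr) | hr) | hr) | hr) | hr
        · obtain ⟨q, hq, rfl⟩ := hr
          rcases Classical.em (q.1 = t) with h | h
          · intro _
            exact ⟨q.1, rfl, Or.inr (by rw [h]; rfl)⟩
          · rintro ⟨-, hneg⟩
            exact absurd (by exact Or.inr rfl : (Lit.pos t).sat (Y ∪ {t}))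
              (hneg (Lit.pos t) ⟨t, ⟨⟨(t, X, Y), hp, rfl⟩, fun hh => h (Set.mem_singleton_iff.mp hh).symm⟩, rfl⟩)
        · obtain ⟨q, hq, q', hq', hne, rfl⟩ := hr
          rintro ⟨hpos, -⟩
          exfalso
          have h1 := htagM q hq (hpos (Or.inl rfl))
          have h2 := htagM q' hq' (hpos (Or.inr rfl))
          exact hne (by rw [h1, h2])
        · obtain ⟨q, hq, x, hx, rfl⟩ := hr
          rintro ⟨hpos, -⟩
          have h1 := htagM q hq (hpos rfl)
          rw [h1] at hx
          exact ⟨x, rfl, Or.inl (hXY hx)⟩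
        · obtain ⟨q, hq, x, hx, y, hy, rfl⟩ := hr
          rintro ⟨hpos, -⟩
          have h1 := htagM q hq (hpos (Or.inr rfl))
          rw [h1] at hx
          exact ⟨x, rfl, Or.inl hx.1⟩
        · obtain ⟨q, hq, a, ha, rfl⟩ := hr
          rintro ⟨hpos, -⟩
          exfalso
          have h1 := htagM q hq (hpos (Or.inl rfl))
          rw [h1] at ha
          rcases hpos (Or.inr rfl) with h | h
          · exact ha.2 h
          · exact htA (by rw [← show a = t from h]; exact ha.1)
        · obtain ⟨q, hq, x, hx, rfl⟩ := hr
          rintro ⟨hpos, hneg⟩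
          exfalso
          have h1 := htagM q hq (hpos rfl)
          rw [h1] at hx
          exact (hneg (Lit.pos x) rfl) (Or.inl hx.1)
    · -- minimality
      rintro ⟨M', hM'ss, hM'red⟩
      have htM' : t ∈ M' := by
        have hc : (⟨{t}, ∅, Lit.pos '' ((Prod.fst '' F) \ {t})⟩ : Rule V) ∈ QR A F :=
          Or.inl (Or.inl (Or.inl (Or.inl (Or.inl ⟨(t, X, Y), hp, rfl⟩))))
        have hnegc : ∀ ℓ ∈ Lit.pos '' ((Prod.fst '' F) \ {t}), ¬ ℓ.sat (Y ∪ {t}) := by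
          rintro ℓ ⟨t', ⟨⟨q, hq, rfl⟩, ht'⟩, rfl⟩
          rintro (h | h)
          · exact (hF1 q hq).2.2 (hYA h)
          · exact ht' h
        obtain ⟨a, ha, haM⟩ := hM'red _ (Or.inr hc) hnegc
          (fun x hx => absurd hx (Set.notMem_empty x))
        rwa [show a = t from ha] at haM
      have hXM' : X ⊆ M' := by
        intro x hx
        have hc : (⟨{x}, {t}, ∅⟩ : Rule V) ∈ QR A F :=
          Or.inl (Or.inl (Or.inl (Or.inr ⟨(t, X, Y), hp, x, hx, rfl⟩)))
        obtain ⟨a, ha, haM⟩ := hM'red _ (Or.inr hc)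
          (fun ℓ hℓ => absurd hℓ (Set.notMem_empty ℓ)) (by rintro y rfl; exact htM')
        rwa [show a = x from ha] at haM
      rcases Classical.em (∃ y, y ∈ M' ∧ y ∈ Y \ X) with ⟨y₀, hy₀M, hy₀⟩ | hmeet
      · -- then M' ⊇ M, contradiction
        have hYXM' : Y \ X ⊆ M' := by
          intro x hx
          have hc : (⟨{x}, {y₀, t}, ∅⟩ : Rule V) ∈ QR A F :=
            Or.inl (Or.inl (Or.inr ⟨(t, X, Y), hp, x, hx, y₀, hy₀, rfl⟩))
          obtain ⟨a, ha, haM⟩ := hM'red _ (Or.inr hc)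
            (fun ℓ hℓ => absurd hℓ (Set.notMem_empty ℓ))
            (by rintro y (rfl | rfl); exacts [hy₀M, htM'])
          rwa [show a = x from ha] at haM
        have : Y ∪ {t} ⊆ M' := by
          rintro x (hx | rfl)
          · rcases Classical.em (x ∈ X) with h | h
            · exact hXM' h
            · exact hYXM' ⟨hx, h⟩
          · exact htM'
        exact hM'ss.2 this
      · -- M' = X ∪ {t}
        push_neg at hmeet
        have hM'eq : M' = X ∪ {t} := by
          apply Set.Subset.antisymm
          · intro x hx
            rcases hM'ss.1 hx with h | h
            · rcases Classical.em (x ∈ X) with h' | h'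
              · exact Or.inl h'
              · exact absurd ⟨h, h'⟩ (hmeet x hx)
            · exact Or.inr h
          · rintro x (hx | rfl)
            · exact hXM' hx
            · exact htM'
        rcases hcond with hXeY | hnred
        · -- X = Y : M' = M, contradiction with proper subset
          apply hM'ss.2
          have hXeY' : X = Y := hXeY
          rw [hM'eq, hXeY']
        · -- X models the reduct of G, contradiction
          apply hnred
          intro r hr
          rw [hM'eq] at hM'red
          have h1 := rule_redSat_inter (hGwf' r hr) (Y ∪ {t}) (X ∪ {t})
          rw [hMiA, tag_inter (hXY.trans hYA) htA] at h1
          exact h1.mpr (hM'red r (Or.inl hr))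


lemma soundness_half {A : Set V} {E : Set (Lit V)} {R₁ R₂ : Set (ERule V)}
    (hwf₁ : (ELP.mk A E R₁).wf) (hwf₂ : (ELP.mk A E R₂).wf)
    (hSEfun : ∀ Φ, (ELP.mk A E R₁).SEfun Φ = (ELP.mk A E R₂).SEfun Φ)
    (Q : ELP V) (M : Set (Set V))
    (h : ((ELP.mk A E R₁).union Q).isCWV M) : ((ELP.mk A E R₂).union Q).isCWV M := by
  obtain ⟨Φ, hΦE, hMAS, hcomp⟩ := h
  have hre1 : (ELP.mk A E R₁).realizable (Φ ∩ E) := by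
    refine ⟨(fun N => N ∩ A) '' M, ?_, hcomp.1.image _, ?_, ?_⟩
    · rintro I ⟨N, hN, rfl⟩
      have hNAS : N ∈ (((ELP.mk A E R₁).union Q).eReduct Φ).AS := hMAS ▸ hN
      have hNmod : ((ELP.mk A E R₁).eReduct Φ).model N := by
        rintro r ⟨r', hr', hdel, rfl⟩
        exact hNAS.2.1 _ ⟨r', Or.inl hr', hdel, rfl⟩
      refine ⟨Set.inter_subset_right, ?_⟩
      rw [← eReduct_inter hwf₁ Φ]
      exact (prog_model_inter (eReduct_wf hwf₁ Φ) N).mpr hNmod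
    · intro ℓ hℓ
      obtain ⟨N, hN, hNs⟩ := hcomp.2.1 ℓ hℓ.1
      refine ⟨N ∩ A, Set.mem_image_of_mem _ hN, ?_⟩
      rw [lit_sat_inter (hwf₁.1 ℓ hℓ.2)]
      exact hNs
    · rintro ℓ hℓ I ⟨N, hN, rfl⟩
      rw [lit_sat_inter (hwf₁.1 ℓ hℓ.1)]
      exact hcomp.2.2 ℓ ⟨Or.inl hℓ.1, fun hc => hℓ.2 ⟨hc, hℓ.1⟩⟩ N hN
  have hSE1 : (ELP.mk A E R₁).SEfun (Φ ∩ E) = ((ELP.mk A E R₁).eReduct (Φ ∩ E)).SE :=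
    SEfun_eq_SE_of_realizable hre1
  have hne2 : ((ELP.mk A E R₂).SEfun (Φ ∩ E)).Nonempty := by
    rw [← hSEfun, hSE1]
    exact SE_nonempty_of_realizable hre1
  obtain ⟨p₀, hp₀⟩ := hne2
  have hre2 : (ELP.mk A E R₂).realizable (Φ ∩ E) := hp₀.1
  have hSEeq : ((ELP.mk A E R₁).eReduct (Φ ∩ E)).SE = ((ELP.mk A E R₂).eReduct (Φ ∩ E)).SE := by
    rw [← hSE1, hSEfun, SEfun_eq_SE_of_realizable hre2]
  have hAS2 : (((ELP.mk A E R₁).union Q).eReduct Φ).AS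
      = (((ELP.mk A E R₂).union Q).eReduct Φ).AS := by
    rw [eReduct_union, eReduct_union, eReduct_inter hwf₁ Φ, eReduct_inter hwf₂ Φ]
    exact turner rfl (eReduct_wf hwf₁ _) (eReduct_wf hwf₂ _) hSEeq
  exact ⟨Φ, hΦE, by rw [← hAS2]; exact hMAS, hcomp⟩


lemma exists_tags {A : Set V} (hA : A.Finite) [Infinite V] :
    ∃ (d : V) (c : Set V → V), d ∉ A ∧ (∀ J, J ⊆ A → c J ∉ A ∧ c J ≠ d) ∧
      (∀ J J', J ⊆ A → J' ⊆ A → c J = c J' → J = J') := by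
  obtain ⟨d, hd⟩ := hA.infinite_compl.nonempty
  have hS : {J : Set V | J ⊆ A}.Finite := Set.Finite.finite_subsets hA
  have hW : ((insert d A : Set V)ᶜ).Infinite := Set.Finite.infinite_compl (hA.insert d)
  obtain ⟨g, hg⟩ := Set.countable_iff_exists_injective.mp hS.countable
  classical
  set emb := hW.natEmbedding
  refine ⟨d, fun J => if h : J ⊆ A then (emb (g ⟨J, h⟩) : V) else d, hd, ?_, ?_⟩
  · intro J hJ
    simp only [dif_pos hJ]
    have hmem := (emb (g ⟨J, hJ⟩)).2
    simp only [Set.mem_compl_iff, Set.mem_insert_iff] at hmem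
    push_neg at hmem
    exact ⟨hmem.2, hmem.1⟩
  · intro J J' hJ hJ' hcc
    simp only [dif_pos hJ, dif_pos hJ'] at hcc
    have := hg (emb.injective (Subtype.coe_injective hcc))
    exact congrArg Subtype.val this

lemma QR_wf {A : Set V} {F : Set (V × Set V × Set V)}
    (hF1 : ∀ p ∈ F, p.2.1 ⊆ p.2.2 ∧ p.2.2 ⊆ A ∧ p.1 ∉ A) :
    ∀ r ∈ QR A F, r.wf (A ∪ Prod.fst '' F) := by
  have hT : ∀ q ∈ F, q.1 ∈ A ∪ Prod.fst '' F := fun q hq =>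
    Or.inr (Set.mem_image_of_mem _ hq)
  rintro r (((((⟨q, hq, rfl⟩ | ⟨q, hq, q', hq', -, rfl⟩) | ⟨q, hq, x, hx, rfl⟩) |
    ⟨q, hq, x, hx, y, hy, rfl⟩) | ⟨q, hq, a, ha, rfl⟩) | ⟨q, hq, x, hx, rfl⟩)
  · refine ⟨by rintro z rfl; exact hT q hq, fun z hz => absurd hz (Set.notMem_empty z), ?_⟩
    rintro ℓ ⟨t', ⟨ht', -⟩, rfl⟩
    rcases ht' with ⟨q', hq', rfl⟩
    exact hT q' hq'
  · refine ⟨fun z hz => absurd hz (Set.notMem_empty z), ?_,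
      fun ℓ hℓ => absurd hℓ (Set.notMem_empty ℓ)⟩
    rintro z (rfl | rfl)
    exacts [hT q hq, hT q' hq']
  · exact ⟨by rintro z rfl; exact Or.inl ((hF1 q hq).2.1 ((hF1 q hq).1 hx)),
      by rintro z rfl; exact hT q hq, fun ℓ hℓ => absurd hℓ (Set.notMem_empty ℓ)⟩
  · refine ⟨by rintro z rfl; exact Or.inl ((hF1 q hq).2.1 hx.1), ?_,
      fun ℓ hℓ => absurd hℓ (Set.notMem_empty ℓ)⟩
    rintro z (rfl | rfl)
    exacts [Or.inl ((hF1 q hq).2.1 hy.1), hT q hq]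
  · refine ⟨fun z hz => absurd hz (Set.notMem_empty z), ?_,
      fun ℓ hℓ => absurd hℓ (Set.notMem_empty ℓ)⟩
    rintro z (rfl | rfl)
    exacts [hT q hq, Or.inl ha.1]
  · refine ⟨fun z hz => absurd hz (Set.notMem_empty z),
      by rintro z rfl; exact hT q hq, ?_⟩
    rintro ℓ rfl
    exact Or.inl ((hF1 q hq).2.1 hx.1)

lemma QELP_wf {A : Set V} {F : Set (V × Set V × Set V)}
    (hF1 : ∀ p ∈ F, p.2.1 ⊆ p.2.2 ∧ p.2.2 ⊆ A ∧ p.1 ∉ A) :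
    (ELP.mk (A ∪ Prod.fst '' F) ∅ (Rule.toERule '' QR A F)).wf := by
  refine ⟨fun ℓ hℓ => absurd hℓ (Set.notMem_empty ℓ), ?_⟩
  rintro er ⟨r, hr, rfl⟩
  obtain ⟨h1, h2, h3⟩ := QR_wf hF1 r hr
  exact ⟨h1, h2, h3, fun ℓ hℓ => absurd hℓ (Set.notMem_empty ℓ),
    fun ℓ hℓ => absurd hℓ (Set.notMem_empty ℓ)⟩

lemma compat_clean {A : Set V} {E Ψ : Set (Lit V)} {K : Set (Set V)} {c : Set V → V}
    {G : Program V}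
    (hEat : ∀ ℓ ∈ E, ℓ.atom ∈ A) (hΨE : Ψ ⊆ E)
    (hc : ∀ J, J ⊆ A → c J ∉ A)
    (hKA : ∀ J ∈ K, J ⊆ A) (hKsat : ∀ J ∈ K, ∀ ℓ ∈ E \ Ψ, ℓ.sat J)
    (hKmem : ∀ I, I ⊆ A → G.model I → (∀ ℓ ∈ E \ Ψ, ℓ.sat I) → I ∈ K)
    (hwit : ∃ I', I' ⊆ {I | I ⊆ A ∧ G.model I} ∧ compatible E Ψ I') :
    compatible E Ψ {M | ∃ J ∈ K, G.model J ∧ M = J ∪ {c J}} := by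
  obtain ⟨I', hsub, hne, h2, h3⟩ := hwit
  have hKI : ∀ J ∈ I', J ∈ K := by
    intro J hJ
    exact hKmem J (hsub hJ).1 (hsub hJ).2 (fun ℓ hℓ => h3 ℓ hℓ J hJ)
  refine ⟨?_, ?_, ?_⟩
  · obtain ⟨J₀, hJ₀⟩ := hne
    exact ⟨J₀ ∪ {c J₀}, J₀, hKI J₀ hJ₀, (hsub hJ₀).2, rfl⟩
  · intro ℓ hℓ
    obtain ⟨J, hJ, hJs⟩ := h2 ℓ hℓ
    refine ⟨J ∪ {c J}, ⟨J, hKI J hJ, (hsub hJ).2, rfl⟩, ?_⟩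
    intro hsat
    apply hJs
    have h1 := lit_sat_inter (I := J ∪ {c J}) (hEat ℓ (hΨE hℓ))
    rw [tag_inter (hsub hJ).1 (hc J (hsub hJ).1)] at h1
    exact h1.mpr hsat
  · rintro ℓ hℓ M ⟨J, hJK, -, rfl⟩
    have h1 := lit_sat_inter (I := J ∪ {c J}) (hEat ℓ hℓ.1)
    rw [tag_inter (hKA J hJK) (hc J (hKA J hJK))] at h1
    exact h1.symm.mpr (hKsat J hJK ℓ hℓ)
lemma caseA {A : Set V} {E : Set (Lit V)} {R₁ R₂ : Set (ERule V)} [Infinite V]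
    (hwf₁ : (ELP.mk A E R₁).wf) (hwf₂ : (ELP.mk A E R₂).wf) (hA : A.Finite)
    {Ψ : Set (Lit V)} (hΨE : Ψ ⊆ E)
    (hre1 : (ELP.mk A E R₁).realizable Ψ) (hre2 : ¬ (ELP.mk A E R₂).realizable Ψ) :
    ∃ Q : ELP V, Q.wf ∧ ¬ ELP.cwvEq ((ELP.mk A E R₁).union Q) ((ELP.mk A E R₂).union Q) := by
  classical
  obtain ⟨d, c, hd, hc, hcinj⟩ := exists_tags hA
  set G₁ := (ELP.mk A E R₁).eReduct Ψ with hG₁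
  set G₂ := (ELP.mk A E R₂).eReduct Ψ with hG₂
  set K : Set (Set V) :=
    {J | J ⊆ A ∧ (∀ ℓ ∈ E \ Ψ, ℓ.sat J) ∧ (G₁.model J ∨ G₂.model J)} with hK
  set F : Set (V × Set V × Set V) := (fun J => (c J, J, J)) '' K with hFdef
  have hF1 : ∀ p ∈ F, p.2.1 ⊆ p.2.2 ∧ p.2.2 ⊆ A ∧ p.1 ∉ A := by
    rintro p ⟨J, hJ, rfl⟩
    exact ⟨subset_rfl, hJ.1, (hc J hJ.1).1⟩
  have hF2 : ∀ p ∈ F, ∀ q ∈ F, p.1 = q.1 → p = q := by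
    rintro p ⟨J, hJ, rfl⟩ q ⟨J', hJ', rfl⟩ h
    rw [hcinj J J' hJ.1 hJ'.1 h]
  obtain ⟨I', hI'sub, hI'comp⟩ := hre1
  have hIK : ∀ J ∈ I', J ∈ K := fun J hJ =>
    ⟨(hI'sub hJ).1, fun ℓ hℓ => hI'comp.2.2 ℓ hℓ J hJ, Or.inl (hI'sub hJ).2⟩
  have hF3 : F.Nonempty := by
    obtain ⟨J₀, hJ₀⟩ := hI'comp.1
    exact ⟨(c J₀, J₀, J₀), J₀, hIK J₀ hJ₀, rfl⟩
  refine ⟨⟨A ∪ Prod.fst '' F, ∅, Rule.toERule '' QR A F⟩, QELP_wf hF1, ?_⟩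
  have hred1 : ((ELP.mk A E R₁).union ⟨A ∪ Prod.fst '' F, ∅, Rule.toERule '' QR A F⟩).eReduct Ψ
      = G₁.union ⟨A ∪ Prod.fst '' F, QR A F⟩ := by
    rw [eReduct_union, plain_eReduct]
  have hred2 : ((ELP.mk A E R₂).union ⟨A ∪ Prod.fst '' F, ∅, Rule.toERule '' QR A F⟩).eReduct Ψ
      = G₂.union ⟨A ∪ Prod.fst '' F, QR A F⟩ := by
    rw [eReduct_union, plain_eReduct]
  have hAS1 : (((ELP.mk A E R₁).union
        ⟨A ∪ Prod.fst '' F, ∅, Rule.toERule '' QR A F⟩).eReduct Ψ).AS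
      = {M | ∃ J ∈ K, G₁.model J ∧ M = J ∪ {c J}} := by
    rw [hred1, gadget_AS (A := A) (F := F) rfl (eReduct_wf hwf₁ Ψ) hF1 hF2 hF3]
    ext M
    constructor
    · rintro ⟨p, hpF, rfl, hmod, -⟩
      obtain ⟨J, hJ, rfl⟩ := hpF
      exact ⟨J, hJ, hmod, rfl⟩
    · rintro ⟨J, hJ, hmod, rfl⟩
      exact ⟨(c J, J, J), ⟨J, hJ, rfl⟩, rfl, hmod, Or.inl rfl⟩
  have hAS2 : (((ELP.mk A E R₂).union
        ⟨A ∪ Prod.fst '' F, ∅, Rule.toERule '' QR A F⟩).eReduct Ψ).AS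
      = {M | ∃ J ∈ K, G₂.model J ∧ M = J ∪ {c J}} := by
    rw [hred2, gadget_AS (A := A) (F := F) rfl (eReduct_wf hwf₂ Ψ) hF1 hF2 hF3]
    ext M
    constructor
    · rintro ⟨p, hpF, rfl, hmod, -⟩
      obtain ⟨J, hJ, rfl⟩ := hpF
      exact ⟨J, hJ, hmod, rfl⟩
    · rintro ⟨J, hJ, hmod, rfl⟩
      exact ⟨(c J, J, J), ⟨J, hJ, rfl⟩, rfl, hmod, Or.inl rfl⟩
  have hcompat : compatible E Ψ {M | ∃ J ∈ K, G₁.model J ∧ M = J ∪ {c J}} :=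
    compat_clean hwf₁.1 hΨE (fun J hJ => (hc J hJ).1)
      (fun J hJ => hJ.1) (fun J hJ => hJ.2.1)
      (fun I hIA hImod hsat => ⟨hIA, hsat, Or.inl hImod⟩) ⟨I', hI'sub, hI'comp⟩
  have hneAS : (((ELP.mk A E R₂).union
        ⟨A ∪ Prod.fst '' F, ∅, Rule.toERule '' QR A F⟩).eReduct Ψ).AS
      ≠ (((ELP.mk A E R₁).union
        ⟨A ∪ Prod.fst '' F, ∅, Rule.toERule '' QR A F⟩).eReduct Ψ).AS := by
    rw [hAS1, hAS2]
    intro heq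
    apply hre2
    refine ⟨I', ?_, hI'comp⟩
    intro J hJ
    refine ⟨(hI'sub hJ).1, ?_⟩
    have hmem1 : J ∪ {c J} ∈ {M | ∃ J ∈ K, G₁.model J ∧ M = J ∪ {c J}} :=
      ⟨J, hIK J hJ, (hI'sub hJ).2, rfl⟩
    rw [← heq] at hmem1
    obtain ⟨J', hJ'K, hJ'mod, hJJ⟩ := hmem1
    have hJeq : J = J' := by
      have h1 : (J ∪ {c J}) ∩ A = J := tag_inter (hI'sub hJ).1 (hc J (hI'sub hJ).1).1
      have h2 : (J' ∪ {c J'}) ∩ A = J' := tag_inter hJ'K.1 (hc J' hJ'K.1).1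
      rw [← h1, hJJ, h2]
    rw [hJeq]
    exact hJ'mod
  exact distinguish hΨE (by rw [hAS1]; exact hcompat) hneAS
lemma caseB {A : Set V} {E : Set (Lit V)} {R₁ R₂ : Set (ERule V)} [Infinite V]
    (hwf₁ : (ELP.mk A E R₁).wf) (hwf₂ : (ELP.mk A E R₂).wf) (hA : A.Finite)
    {Ψ : Set (Lit V)} (hΨE : Ψ ⊆ E)
    (hre1 : (ELP.mk A E R₁).realizable Ψ)
    {X Y : Set V} (hXY : X ⊆ Y) (hYA : Y ⊆ A)
    (h1 : ¬ (((ELP.mk A E R₁).eReduct Ψ).model Y ∧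
      (X = Y ∨ ¬ ((ELP.mk A E R₁).eReduct Ψ).redModel Y X)))
    (h2 : ((ELP.mk A E R₂).eReduct Ψ).model Y ∧
      (X = Y ∨ ¬ ((ELP.mk A E R₂).eReduct Ψ).redModel Y X)) :
    ∃ Q : ELP V, Q.wf ∧ ¬ ELP.cwvEq ((ELP.mk A E R₁).union Q) ((ELP.mk A E R₂).union Q) := by
  classical
  obtain ⟨d, c, hd, hc, hcinj⟩ := exists_tags hA
  set G₁ := (ELP.mk A E R₁).eReduct Ψ with hG₁
  set G₂ := (ELP.mk A E R₂).eReduct Ψ with hG₂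
  set K : Set (Set V) :=
    {J | J ⊆ A ∧ (∀ ℓ ∈ E \ Ψ, ℓ.sat J) ∧ (G₁.model J ∨ G₂.model J)} with hK
  set F : Set (V × Set V × Set V) := (fun J => (c J, J, J)) '' K ∪ {(d, X, Y)} with hFdef
  have hF1 : ∀ p ∈ F, p.2.1 ⊆ p.2.2 ∧ p.2.2 ⊆ A ∧ p.1 ∉ A := by
    rintro p (⟨J, hJ, rfl⟩ | rfl)
    · exact ⟨subset_rfl, hJ.1, (hc J hJ.1).1⟩
    · exact ⟨hXY, hYA, hd⟩
  have hF2 : ∀ p ∈ F, ∀ q ∈ F, p.1 = q.1 → p = q := by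
    rintro p (⟨J, hJ, rfl⟩ | rfl) q (⟨J', hJ', rfl⟩ | rfl) h
    · rw [hcinj J J' hJ.1 hJ'.1 h]
    · exact absurd h (hc J hJ.1).2
    · exact absurd h.symm (hc J' hJ'.1).2
    · rfl
  have hF3 : F.Nonempty := ⟨(d, X, Y), Or.inr rfl⟩
  obtain ⟨I', hI'sub, hI'comp⟩ := hre1
  have hIK : ∀ J ∈ I', J ∈ K := fun J hJ =>
    ⟨(hI'sub hJ).1, fun ℓ hℓ => hI'comp.2.2 ℓ hℓ J hJ, Or.inl (hI'sub hJ).2⟩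
  refine ⟨⟨A ∪ Prod.fst '' F, ∅, Rule.toERule '' QR A F⟩, QELP_wf hF1, ?_⟩
  have hred1 : ((ELP.mk A E R₁).union ⟨A ∪ Prod.fst '' F, ∅, Rule.toERule '' QR A F⟩).eReduct Ψ
      = G₁.union ⟨A ∪ Prod.fst '' F, QR A F⟩ := by
    rw [eReduct_union, plain_eReduct]
  have hred2 : ((ELP.mk A E R₂).union ⟨A ∪ Prod.fst '' F, ∅, Rule.toERule '' QR A F⟩).eReduct Ψ
      = G₂.union ⟨A ∪ Prod.fst '' F, QR A F⟩ := by
    rw [eReduct_union, plain_eReduct]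
  have hAS1 : (((ELP.mk A E R₁).union
        ⟨A ∪ Prod.fst '' F, ∅, Rule.toERule '' QR A F⟩).eReduct Ψ).AS
      = {M | ∃ J ∈ K, G₁.model J ∧ M = J ∪ {c J}} := by
    rw [hred1, gadget_AS (A := A) (F := F) rfl (eReduct_wf hwf₁ Ψ) hF1 hF2 hF3]
    ext M
    constructor
    · rintro ⟨p, hpF, rfl, hmod, hcond⟩
      rcases hpF with ⟨J, hJ, rfl⟩ | rfl
      · exact ⟨J, hJ, hmod, rfl⟩
      · exact absurd ⟨hmod, hcond⟩ h1
    · rintro ⟨J, hJ, hmod, rfl⟩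
      exact ⟨(c J, J, J), Or.inl ⟨J, hJ, rfl⟩, rfl, hmod, Or.inl rfl⟩
  have hmem2 : Y ∪ {d} ∈ (((ELP.mk A E R₂).union
        ⟨A ∪ Prod.fst '' F, ∅, Rule.toERule '' QR A F⟩).eReduct Ψ).AS := by
    rw [hred2, gadget_AS (A := A) (F := F) rfl (eReduct_wf hwf₂ Ψ) hF1 hF2 hF3]
    exact ⟨(d, X, Y), Or.inr rfl, rfl, h2.1, h2.2⟩
  have hcompat : compatible E Ψ {M | ∃ J ∈ K, G₁.model J ∧ M = J ∪ {c J}} :=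
    compat_clean hwf₁.1 hΨE (fun J hJ => (hc J hJ).1)
      (fun J hJ => hJ.1) (fun J hJ => hJ.2.1)
      (fun I hIA hImod hsat => ⟨hIA, hsat, Or.inl hImod⟩) ⟨I', hI'sub, hI'comp⟩
  have hneAS : (((ELP.mk A E R₂).union
        ⟨A ∪ Prod.fst '' F, ∅, Rule.toERule '' QR A F⟩).eReduct Ψ).AS
      ≠ (((ELP.mk A E R₁).union
        ⟨A ∪ Prod.fst '' F, ∅, Rule.toERule '' QR A F⟩).eReduct Ψ).AS := by
    intro heq
    rw [heq, hAS1] at hmem2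
    obtain ⟨J, hJK, -, hJeq⟩ := hmem2
    have hdmem : d ∈ J ∪ {c J} := by rw [← hJeq]; exact Or.inr rfl
    rcases hdmem with h | h
    · exact hd (hJK.1 h)
    · exact (hc J hJK.1).2 (Set.mem_singleton_iff.mp h).symm
  exact distinguish hΨE (by rw [hAS1]; exact hcompat) hneAS

end SEaux

namespace SEaux
variable {V : Type}

lemma cwv_ne_symm {P Q : ELP V} (h : ¬ ELP.cwvEq P Q) : ¬ ELP.cwvEq Q P :=
  fun hc => h (fun M => (hc M).symm)

lemma completeness_aux {A : Set V} {E : Set (Lit V)} {R₁ R₂ : Set (ERule V)} [Infinite V]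
    (hwf₁ : (ELP.mk A E R₁).wf) (hwf₂ : (ELP.mk A E R₂).wf) (hA : A.Finite)
    {Φ₀ : Set (Lit V)} (hne : (ELP.mk A E R₁).SEfun Φ₀ ≠ (ELP.mk A E R₂).SEfun Φ₀) :
    ∃ Q : ELP V, Q.wf ∧ ¬ ELP.cwvEq ((ELP.mk A E R₁).union Q) ((ELP.mk A E R₂).union Q) := by
  obtain ⟨hSEne, hreal⟩ := dichotomy hwf₁ hwf₂ hne
  have hΨE : Φ₀ ∩ E ⊆ E := Set.inter_subset_right
  by_cases hre1 : (ELP.mk A E R₁).realizable (Φ₀ ∩ E)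
  · by_cases hre2 : (ELP.mk A E R₂).realizable (Φ₀ ∩ E)
    · -- both realizable: SE sets differ
      have hpair : ∃ p : Set V × Set V,
          ¬ (p ∈ ((ELP.mk A E R₁).eReduct (Φ₀ ∩ E)).SE ↔
             p ∈ ((ELP.mk A E R₂).eReduct (Φ₀ ∩ E)).SE) := by
        by_contra h
        push_neg at h
        exact hSEne (Set.ext fun p => h p)
      obtain ⟨⟨X, Y⟩, hp⟩ := hpair
      rcases Classical.em ((X, Y) ∈ ((ELP.mk A E R₁).eReduct (Φ₀ ∩ E)).SE) with hp1 | hp1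
      · -- in SE₁ \ SE₂
        have hp2 : (X, Y) ∉ ((ELP.mk A E R₂).eReduct (Φ₀ ∩ E)).SE := fun h => hp ⟨fun _ => h, fun _ => hp1⟩
        obtain ⟨hXY, hYA, hmod1, hred1⟩ := hp1
        by_cases hmod2 : ((ELP.mk A E R₂).eReduct (Φ₀ ∩ E)).model Y
        · -- subcase ii
          have hnred2 : ¬ ((ELP.mk A E R₂).eReduct (Φ₀ ∩ E)).redModel Y X :=
            fun h => hp2 ⟨hXY, hYA, hmod2, h⟩
          have hXneY : X ≠ Y := by
            rintro rfl
            exact hnred2 ((redModel_self_iff _ _).mpr hmod2)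
          exact caseB hwf₁ hwf₂ hA hΨE hre1 hXY hYA
            (fun ⟨_, hor⟩ => hor.elim hXneY (fun hn => hn hred1)) ⟨hmod2, Or.inr hnred2⟩
        · -- subcase i : swap roles
          obtain ⟨Q, hQwf, hQne⟩ := caseB hwf₂ hwf₁ hA hΨE hre2 (subset_rfl : Y ⊆ Y) hYA
            (fun hh => hmod2 hh.1) ⟨hmod1, Or.inl rfl⟩
          exact ⟨Q, hQwf, cwv_ne_symm hQne⟩
      · -- in SE₂ \ SE₁
        have hp2 : (X, Y) ∈ ((ELP.mk A E R₂).eReduct (Φ₀ ∩ E)).SE := by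
          by_contra h
          exact hp ⟨fun hh => absurd hh hp1, fun hh => absurd hh h⟩
        obtain ⟨hXY, hYA, hmod2, hred2⟩ := hp2
        by_cases hmod1 : ((ELP.mk A E R₁).eReduct (Φ₀ ∩ E)).model Y
        · have hnred1 : ¬ ((ELP.mk A E R₁).eReduct (Φ₀ ∩ E)).redModel Y X :=
            fun h => hp1 ⟨hXY, hYA, hmod1, h⟩
          have hXneY : X ≠ Y := by
            rintro rfl
            exact hnred1 ((redModel_self_iff _ _).mpr hmod1)
          obtain ⟨Q, hQwf, hQne⟩ := caseB hwf₂ hwf₁ hA hΨE hre2 hXY hYA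
            (fun ⟨_, hor⟩ => hor.elim hXneY (fun hn => hn hred2)) ⟨hmod1, Or.inr hnred1⟩
          exact ⟨Q, hQwf, cwv_ne_symm hQne⟩
        · exact caseB hwf₁ hwf₂ hA hΨE hre1 (subset_rfl : Y ⊆ Y) hYA
            (fun hh => hmod1 hh.1) ⟨hmod2, Or.inl rfl⟩
    · exact caseA hwf₁ hwf₂ hA hΨE hre1 hre2
  · have hre2 : (ELP.mk A E R₂).realizable (Φ₀ ∩ E) := hreal.resolve_left hre1
    obtain ⟨Q, hQwf, hQne⟩ := caseA hwf₂ hwf₁ hA hΨE hre2 hre1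
    exact ⟨Q, hQwf, cwv_ne_symm hQne⟩

end SEaux

theorem stmt8' {V : Type} [Infinite V] (A : Set V) (hA : A.Finite) (E : Set (Lit V))
    (R₁ R₂ : Set (ERule V))
    (hwf₁ : (ELP.mk A E R₁).wf) (hwf₂ : (ELP.mk A E R₂).wf) :
    ELP.strongELPCWVEq (ELP.mk A E R₁) (ELP.mk A E R₂) ↔
      ∀ Φ : Set (Lit V), (ELP.mk A E R₁).SEfun Φ = (ELP.mk A E R₂).SEfun Φ := by
  constructor
  · intro hstrong Φ
    by_contra hne
    obtain ⟨Q, hQwf, hncwv⟩ := SEaux.completeness_aux hwf₁ hwf₂ hA hne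
    exact hncwv (hstrong Q hQwf)
  · intro hSEfun Q hQwf M
    constructor
    · exact SEaux.soundness_half hwf₁ hwf₂ hSEfun Q M
    · exact SEaux.soundness_half hwf₂ hwf₁ (fun Φ => (hSEfun Φ).symm) Q M

/-- Two ELPs over the same finite atom domain and epistemic-literal domain
are strongly equivalent (strongly ELP-CWV-equivalent) iff they have the same
SE-function. -/
theorem stmt8 {V : Type} [Infinite V] (A : Set V) (hA : A.Finite) (E : Set (Lit V))
    (R₁ R₂ : Set (ERule V))
    (hwf₁ : (ELP.mk A E R₁).wf) (hwf₂ : (ELP.mk A E R₂).wf) :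
    ELP.strongELPCWVEq (ELP.mk A E R₁) (ELP.mk A E R₂) ↔
      ∀ Φ : Set (Lit V), (ELP.mk A E R₁).SEfun Φ = (ELP.mk A E R₂).SEfun Φ := by
  exact stmt8' A hA E R₁ R₂ hwf₁ hwf₂
end

section
/- Let Π₁ = (𝒜, ℛ₁) and Π₂ = (𝒜, ℛ₂) be two logic programs (over a finite atom domain 𝒜), and let Π₁' = (𝒜, ∅, ℛ₁) and Π₂' = (𝒜, ∅, ℛ₂) be the epistemic logic programs with the same rule sets and empty epistemic-literal domain. Then Π₁ and Π₂ are strongly equivalent as logic programs if and only if Π₁' and Π₂' are strongly equivalent as epistemic logic programs (i.e., strongly ELP-CWV-equivalent). -/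
variable {V : Type}

lemma Lit.atom_flip (ℓ : Lit V) : ℓ.flip.atom = ℓ.atom := by cases ℓ <;> rfl

lemma toERule_reduct (r : Rule V) (Φ : Set (Lit V)) : (r.toERule).reduct Φ = r := by
  cases r
  simp [Rule.toERule, ERule.reduct]

/-- The rules of the epistemic reduct of `Q` w.r.t. `Φ`. -/
def eRules (Q : ELP V) (Φ : Set (Lit V)) : Set (Rule V) :=
  {q | ∃ r ∈ Q.R, (∀ ℓ ∈ r.eneg, ℓ ∉ Φ) ∧ q = r.reduct Φ}

lemma eReduct_union (A : Set V) (R : Set (Rule V)) (Q : ELP V) (Φ : Set (Lit V)) :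
    ((ELP.mk A ∅ (Rule.toERule '' R)).union Q).eReduct Φ =
      (Program.mk A R).union ⟨Q.A, eRules Q Φ⟩ := by
  unfold ELP.union ELP.eReduct Program.union eRules
  congr 1
  ext q
  simp only [Set.mem_setOf_eq, Set.mem_union, Set.mem_image]
  constructor
  · rintro ⟨r, (⟨r₀, hr₀, rfl⟩ | hr), hc, rfl⟩
    · left; rw [toERule_reduct]; exact hr₀
    · right; exact ⟨r, hr, hc, rfl⟩
  · rintro (hq | ⟨r, hr, hc, rfl⟩)
    · exact ⟨q.toERule, Or.inl ⟨q, hq, rfl⟩, by simp [Rule.toERule],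
        (toERule_reduct q Φ).symm⟩
    · exact ⟨r, Or.inr hr, hc, rfl⟩

lemma eRules_wf (Q : ELP V) (hQ : Q.wf) (Φ : Set (Lit V)) :
    (Program.mk Q.A (eRules Q Φ)).wf := by
  rintro q ⟨r, hr, -, rfl⟩
  obtain ⟨hE, hR⟩ := hQ
  obtain ⟨h1, h2, h3, h4, h5⟩ := hR r hr
  refine ⟨h1, h2, ?_⟩
  intro ℓ hl
  rcases hl with (hl | ⟨hl, -⟩) | ⟨ℓ', hl', rfl⟩
  · exact h3 ℓ hl
  · exact hE ℓ (h4 hl)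
  · rw [Lit.atom_flip]; exact hE ℓ' (h5 hl')

/-- Two plain logic programs are strongly equivalent iff the ELPs obtained
from them (with empty epistemic-literal domain) are strongly ELP-CWV-equivalent. -/
theorem stmt9 {V : Type} [Infinite V] (A : Set V) (hA : A.Finite)
    (R₁ R₂ : Set (Rule V))
    (hwf₁ : (Program.mk A R₁).wf) (hwf₂ : (Program.mk A R₂).wf) :
    Program.strongEq (Program.mk A R₁) (Program.mk A R₂) ↔
      ELP.strongELPCWVEq (ELP.mk A ∅ (Rule.toERule '' R₁))
        (ELP.mk A ∅ (Rule.toERule '' R₂)) := by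
  constructor
  · -- strong plain equivalence implies strong ELP-CWV-equivalence
    intro h Q hQ M
    constructor <;> rintro ⟨Φ, hΦE, hM, hcomp⟩ <;> refine ⟨Φ, hΦE, ?_, hcomp⟩
    · rw [eReduct_union] at hM
      rw [eReduct_union, ← h ⟨Q.A, eRules Q Φ⟩ (eRules_wf Q hQ Φ)]
      exact hM
    · rw [eReduct_union] at hM
      rw [eReduct_union, h ⟨Q.A, eRules Q Φ⟩ (eRules_wf Q hQ Φ)]
      exact hM
  · -- converse
    intro h P hP
    have hQwf : (ELP.mk P.A ∅ (Rule.toERule '' P.R)).wf := by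
      refine ⟨by simp, ?_⟩
      rintro r ⟨r₀, hr₀, rfl⟩
      obtain ⟨h1, h2, h3⟩ := hP r₀ hr₀
      exact ⟨h1, h2, h3, by simp [Rule.toERule], by simp [Rule.toERule]⟩
    have hc := h (ELP.mk P.A ∅ (Rule.toERule '' P.R)) hQwf
    have hR : ∀ Φ : Set (Lit V), eRules (ELP.mk P.A ∅ (Rule.toERule '' P.R)) Φ = P.R := by
      intro Φ
      ext q
      simp only [eRules, Set.mem_setOf_eq]
      constructor
      · rintro ⟨r, ⟨r₀, h0, rfl⟩, -, rfl⟩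
        rw [toERule_reduct]; exact h0
      · intro hq
        exact ⟨q.toERule, ⟨q, hq, rfl⟩, by simp [Rule.toERule],
          (toERule_reduct q Φ).symm⟩
    have key : ∀ (R : Set (Rule V)) (M : Set (Set V)),
        ((ELP.mk A ∅ (Rule.toERule '' R)).union
            (ELP.mk P.A ∅ (Rule.toERule '' P.R))).isCWV M ↔
          (M = ((Program.mk A R).union P).AS ∧ M.Nonempty) := by
      intro R M
      constructor
      · rintro ⟨Φ, hΦ, hM, hcomp⟩
        have hΦ0 : Φ = ∅ := Set.subset_empty_iff.mp (by simpa [ELP.union] using hΦ)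
        subst hΦ0
        rw [eReduct_union, hR] at hM
        exact ⟨hM, hcomp.1⟩
      · rintro ⟨hM, hne⟩
        refine ⟨∅, by simp, ?_, ⟨hne, by simp, by simp [ELP.union]⟩⟩
        rw [eReduct_union, hR]
        exact hM
    by_cases h1 : ((Program.mk A R₁).union P).AS.Nonempty
    · exact ((key R₂ _).mp ((hc _).mp ((key R₁ _).mpr ⟨rfl, h1⟩))).1
    · by_cases h2 : ((Program.mk A R₂).union P).AS.Nonempty
      · exact (((key R₁ _).mp ((hc _).mpr ((key R₂ _).mpr ⟨rfl, h2⟩))).1).symm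
      · rw [Set.not_nonempty_iff_eq_empty] at h1 h2
        rw [h1, h2]
end

section
/- Let Π = (𝒜, ℰ, ℛ) be an epistemic logic program, Φ ⊆ ℰ a guess, and suppose 𝒴 = 𝒮ℰ_Π(Φ) is non-empty. Then there is a set 𝒞 ⊆ { Y | (X,Y) ∈ 𝒴 } that is Φ-compatible w.r.t. ℰ and has cardinality at most max(|Φ|, 1). -/
variable {V : Type}

/-- If `𝒴 = 𝒮ℰ_P(Φ)` is non-empty, then some set
`𝒞 ⊆ { Y | (X,Y) ∈ 𝒴 }` of cardinality at most `max |Φ| 1` is `Φ`-compatible. -/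
theorem stmt11 {V : Type} (P : ELP V) (hwf : P.wf) (Φ : Set (Lit V)) (hΦ : Φ ⊆ P.E)
    (hΦfin : Φ.Finite) (hne : (P.SEfun Φ).Nonempty) :
    ∃ C : Set (Set V), C ⊆ {Y | ∃ X, (X, Y) ∈ P.SEfun Φ} ∧ compatible P.E Φ C ∧
      C.Finite ∧ C.ncard ≤ max Φ.ncard 1 := by

  obtain ⟨p0, hp0⟩ := hne
  have hreal : P.realizable Φ := hp0.1
  obtain ⟨I', hI'sub, hI'ne, hI'2, hI'3⟩ := hreal
  -- every member of I' gives an SE-model (J,J)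
  have hmem : ∀ J ∈ I', J ∈ {Y | ∃ X, (X, Y) ∈ P.SEfun Φ} := by
    intro J hJ
    obtain ⟨hJA, hJmod⟩ := hI'sub hJ
    exact ⟨J, hp0.1, subset_rfl, hJA, hJmod,
      fun r hr hneg hpos => hJmod r hr ⟨hpos, hneg⟩⟩
  rcases Set.eq_empty_or_nonempty Φ with hΦe | hΦne
  · obtain ⟨J0, hJ0⟩ := hI'ne
    refine ⟨{J0}, ?_, ⟨⟨J0, rfl⟩, ?_, ?_⟩, Set.finite_singleton _, ?_⟩
    · intro x hx; rw [Set.mem_singleton_iff] at hx; rw [hx]; exact hmem J0 hJ0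
    · intro ℓ hℓ; rw [hΦe] at hℓ; exact absurd hℓ (Set.notMem_empty _)
    · intro ℓ hℓ J hJ; rw [Set.mem_singleton_iff] at hJ
      exact hJ ▸ hI'3 ℓ hℓ J0 hJ0
    · simp [Set.ncard_singleton]
  · have hchoice : ∀ ℓ ∈ Φ, ∃ J ∈ I', ¬ ℓ.sat J := hI'2
    choose f hf1 hf2 using hchoice
    classical
    let g : Lit V → Set V := fun ℓ => if h : ℓ ∈ Φ then f ℓ h else ∅
    have hg1 : ∀ ℓ ∈ Φ, g ℓ ∈ I' := fun ℓ h => by simp only [g, dif_pos h]; exact hf1 ℓ h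
    have hg2 : ∀ ℓ (h : ℓ ∈ Φ), ¬ ℓ.sat (g ℓ) := fun ℓ h => by
      simp only [g, dif_pos h]; exact hf2 ℓ h
    refine ⟨g '' Φ, ?_, ⟨hΦne.image g, ?_, ?_⟩, hΦfin.image g, ?_⟩
    · rintro x ⟨ℓ, hℓ, rfl⟩; exact hmem _ (hg1 ℓ hℓ)
    · intro ℓ hℓ; exact ⟨g ℓ, ⟨ℓ, hℓ, rfl⟩, hg2 ℓ hℓ⟩
    · rintro ℓ hℓ J ⟨m, hm, rfl⟩; exact hI'3 ℓ hℓ _ (hg1 m hm)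
    · exact le_max_of_le_left (Set.ncard_image_le hΦfin)
end

section
/- An ELP rule r is tautological if and only if for the single-rule ELP Π_r = (𝒜, ℰ, {r}) it holds that 𝒮ℰ_{Π_r}(Φ) = 𝒮_𝒜 for each consistent guess Φ ⊆ ℰ. -/
variable {V : Type}

/-! ### Auxiliary development -/

namespace Stmt12

variable {V : Type}

@[simp] lemma flip_sat (I : Set V) (ℓ : Lit V) : ℓ.flip.sat I ↔ ¬ ℓ.sat I := by
  cases ℓ <;> simp [Lit.flip, Lit.sat]

lemma sat_constraint {I : Set V} {p : Set V} {n : Set (Lit V)} :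
    Rule.sat I ⟨∅, p, n⟩ ↔ ¬ (p ⊆ I ∧ ∀ ℓ ∈ n, ¬ ℓ.sat I) := by
  unfold Rule.sat
  simp

lemma sat_select {I : Set V} {w : V} {p : Set V} {n : Set (Lit V)}
    (hw : Lit.neg w ∈ n) : Rule.sat I ⟨{w}, p, n⟩ := by
  rintro ⟨-, hn⟩
  have h := hn _ hw
  simp [Lit.sat] at h
  exact ⟨w, rfl, h⟩

/-- box-constraint rule `⊥ ← ¬ℓ`, forcing `ℓ` to hold. -/
def bRule (ℓ : Lit V) : Rule V := ⟨∅, ∅, {ℓ}⟩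

lemma sat_bRule {I : Set V} {ℓ : Lit V} : Rule.sat I (bRule ℓ) ↔ ℓ.sat I := by
  unfold bRule
  rw [sat_constraint]
  constructor
  · intro h; by_contra hs; exact h ⟨by simp, by simpa using hs⟩
  · rintro h ⟨-, hn⟩; exact hn ℓ rfl h

lemma redSat_bRule {Y X : Set V} {ℓ : Lit V} (h : ℓ.sat Y) :
    Rule.redSat Y X (bRule ℓ) := by
  intro hn
  exact absurd h (hn ℓ rfl)

lemma redSat_constraint_of_negsat {Y X : Set V} {p : Set V} {n : Set (Lit V)}
    {m : Lit V} (hm : m ∈ n) (h : m.sat Y) :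
    Rule.redSat Y X ⟨∅, p, n⟩ := by
  intro hn
  exact absurd h (hn m hm)

lemma redSat_constraint_of_posfail {Y X : Set V} {p : Set V} {n : Set (Lit V)}
    {a : V} (ha : a ∈ p) (h : a ∉ X) :
    Rule.redSat Y X ⟨∅, p, n⟩ := by
  intro _ hp
  exact absurd (hp ha) h

@[simp] lemma toERule_reduct (g : Rule V) (Θ : Set (Lit V)) :
    (Rule.toERule g).reduct Θ = g := by
  cases g with
  | mk h p n => simp [Rule.toERule, ERule.reduct]

lemma reduct_inter {r : ERule V} {E Θ : Set (Lit V)} (he : r.epos ⊆ E) :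
    r.reduct Θ = r.reduct (Θ ∩ E) := by
  unfold ERule.reduct
  congr 1
  ext m
  simp only [Set.mem_union, Set.mem_diff, Set.mem_inter_iff]
  constructor
  · rintro ((h | ⟨h1, h2⟩) | h)
    · exact Or.inl (Or.inl h)
    · exact Or.inl (Or.inr ⟨h1, fun hc => h2 hc.1⟩)
    · exact Or.inr h
  · rintro ((h | ⟨h1, h2⟩) | h)
    · exact Or.inl (Or.inl h)
    · exact Or.inl (Or.inr ⟨h1, fun hc => h2 ⟨hc, he h1⟩⟩)
    · exact Or.inr h

/-- atoms of a plain rule contained in `A` -/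
def ratoms (q : Rule V) (A : Set V) : Prop :=
  q.head ⊆ A ∧ q.pos ⊆ A ∧ ∀ ℓ ∈ q.neg, ℓ.atom ∈ A

lemma litsat_inter {I A : Set V} {ℓ : Lit V} (h : ℓ.atom ∈ A) :
    ℓ.sat (I ∩ A) ↔ ℓ.sat I := by
  cases ℓ with
  | pos a => simpa [Lit.sat, Lit.atom] using fun _ => h
  | neg a =>
      simp only [Lit.sat, Lit.atom] at *
      constructor
      · intro hn hc; exact hn ⟨hc, h⟩
      · intro hn hc; exact hn hc.1

lemma sat_inter {I A : Set V} {q : Rule V} (hq : ratoms q A) :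
    Rule.sat (I ∩ A) q ↔ Rule.sat I q := by
  obtain ⟨hh, hp, hn⟩ := hq
  unfold Rule.sat
  constructor
  · rintro h ⟨h1, h2⟩
    obtain ⟨a, ha, haI⟩ := h ⟨fun x hx => ⟨h1 hx, hp hx⟩,
      fun ℓ hℓ => by rw [litsat_inter (hn ℓ hℓ)]; exact h2 ℓ hℓ⟩
    exact ⟨a, ha, haI.1⟩
  · rintro h ⟨h1, h2⟩
    obtain ⟨a, ha, haI⟩ := h ⟨fun x hx => (h1 hx).1,
      fun ℓ hℓ => by rw [← litsat_inter (hn ℓ hℓ)]; exact h2 ℓ hℓ⟩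
    exact ⟨a, ha, haI, hh ha⟩

lemma redSat_inter {Y X A : Set V} {q : Rule V} (hq : ratoms q A) :
    Rule.redSat (Y ∩ A) (X ∩ A) q → Rule.redSat Y X q := by
  obtain ⟨hh, hp, hn⟩ := hq
  intro h hneg hpos
  obtain ⟨a, ha, haX⟩ := h (fun ℓ hℓ => by rw [litsat_inter (hn ℓ hℓ)]; exact hneg ℓ hℓ)
    (fun x hx => ⟨hpos hx, hp hx⟩)
  exact ⟨a, ha, haX.1⟩

end Stmt12

namespace Stmt12

variable {V : Type}

/-- all literals over atoms of `A` -/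
def litsOf (A : Set V) : Set (Lit V) := {ℓ | ℓ.atom ∈ A}

/-- negative force rule `⊥ ← ¬ not ℓ` -/
def fneg (ℓ : Lit V) : ERule V := ⟨∅, ∅, ∅, ∅, {ℓ}⟩
/-- positive force rule `⊥ ← not ℓ` -/
def fpos (ℓ : Lit V) : ERule V := ⟨∅, ∅, ∅, {ℓ}, ∅⟩

/-- rules fixing the guess to `Θ` (within `F`). -/
def forceR (F Θ : Set (Lit V)) : Set (ERule V) :=
  {re | (∃ ℓ ∈ Θ, re = fneg ℓ) ∨ ∃ ℓ ∈ F \ Θ, re = fpos ℓ}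

/-- the unified counterexample gadget ELP. -/
def gadget (A : Set V) (F Θ : Set (Lit V)) (G : Set (Rule V)) : ELP V :=
  ⟨A, F, forceR F Θ ∪ Rule.toERule '' G⟩

lemma mem_gadget_R {A : Set V} {F Θ : Set (Lit V)} {G : Set (Rule V)} {re : ERule V} :
    re ∈ (gadget A F Θ G).R ↔
      (∃ ℓ ∈ Θ, re = fneg ℓ) ∨ (∃ ℓ ∈ F \ Θ, re = fpos ℓ) ∨ ∃ g ∈ G, re = g.toERule := by
  show re ∈ forceR F Θ ∪ _ ↔ _
  rw [Set.mem_union]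
  unfold forceR
  constructor
  · rintro (h | h)
    · rcases h with h | h
      · exact Or.inl h
      · exact Or.inr (Or.inl h)
    · obtain ⟨g, hg, h⟩ := h
      exact Or.inr (Or.inr ⟨g, hg, h.symm⟩)
  · rintro (h | h | ⟨g, hg, rfl⟩)
    · exact Or.inl (Or.inl h)
    · exact Or.inl (Or.inr h)
    · exact Or.inr ⟨g, hg, rfl⟩

lemma gadget_wf {A : Set V} {F Θ : Set (Lit V)} {G : Set (Rule V)}
    (hF : ∀ ℓ ∈ F, ℓ.atom ∈ A) (hΘ : Θ ⊆ F) (hG : ∀ g ∈ G, ratoms g A) :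
    (gadget A F Θ G).wf := by
  constructor
  · exact hF
  · intro re hre
    rcases mem_gadget_R.mp hre with ⟨ℓ, hℓ, rfl⟩ | ⟨ℓ, hℓ, rfl⟩ | ⟨g, hg, rfl⟩
    · exact ⟨by simp [fneg], by simp [fneg], by simp [fneg],
        by simp [fneg], by simp [fneg]; exact hΘ hℓ⟩
    · exact ⟨by simp [fpos], by simp [fpos], by simp [fpos],
        by simp [fpos]; exact hℓ.1, by simp [fpos]⟩
    · obtain ⟨h1, h2, h3⟩ := hG g hg
      exact ⟨h1, h2, h3, by simp [Rule.toERule], by simp [Rule.toERule]⟩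

lemma singleton_diff_of_notMem {ℓ : Lit V} {Θ : Set (Lit V)} (h : ℓ ∉ Θ) :
    ({ℓ} : Set (Lit V)) \ Θ = {ℓ} := by
  ext x; simp only [Set.mem_diff, Set.mem_singleton_iff]
  exact ⟨fun hx => hx.1, fun hx => ⟨hx, hx ▸ h⟩⟩

lemma fpos_reduct {ℓ : Lit V} {Θ : Set (Lit V)} (h : ℓ ∉ Θ) :
    (fpos ℓ).reduct Θ = bRule ℓ := by
  unfold fpos ERule.reduct bRule
  simp [singleton_diff_of_notMem h]

lemma mem_union_R {P₁ P₂ : ELP V} {re : ERule V} :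
    re ∈ (P₁.union P₂).R ↔ re ∈ P₁.R ∨ re ∈ P₂.R := Set.mem_union ..

/-- rule set of the reduct of `(A,E,R₀) ∪ gadget` at its own guess `Θ`. -/
lemma mem_redrules {A : Set V} {E F Θ : Set (Lit V)} {G : Set (Rule V)}
    {R₀ : Set (ERule V)} {q : Rule V} :
    q ∈ (((ELP.mk A E R₀).union (gadget A F Θ G)).eReduct Θ).R ↔
      ((∃ re ∈ R₀, (∀ ℓ ∈ re.eneg, ℓ ∉ Θ) ∧ q = re.reduct Θ) ∨
        (∃ ℓ ∈ F \ Θ, q = bRule ℓ) ∨ q ∈ G) := by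
  constructor
  · rintro ⟨re, hre, hsur, rfl⟩
    rcases mem_union_R.mp hre with hre | hre
    · exact Or.inl ⟨re, hre, hsur, rfl⟩
    · rcases mem_gadget_R.mp hre with ⟨ℓ, hℓ, rfl⟩ | ⟨ℓ, hℓ, rfl⟩ | ⟨g, hg, rfl⟩
      · exact absurd hℓ (hsur ℓ (by simp [fneg]))
      · exact Or.inr (Or.inl ⟨ℓ, hℓ, fpos_reduct hℓ.2⟩)
      · exact Or.inr (Or.inr (by rw [toERule_reduct]; exact hg))
  · rintro (⟨re, hre, hsur, rfl⟩ | ⟨ℓ, hℓ, rfl⟩ | hq)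
    · exact ⟨re, mem_union_R.mpr (Or.inl hre), hsur, rfl⟩
    · exact ⟨fpos ℓ, mem_union_R.mpr (Or.inr (mem_gadget_R.mpr
        (Or.inr (Or.inl ⟨ℓ, hℓ, rfl⟩)))), by simp [fpos], (fpos_reduct hℓ.2).symm⟩
    · exact ⟨Rule.toERule q, mem_union_R.mpr (Or.inr (mem_gadget_R.mpr
        (Or.inr (Or.inr ⟨q, hq, rfl⟩)))), by simp [Rule.toERule], (toERule_reduct q Θ).symm⟩

lemma union_gadget_A {A : Set V} {E F Θ : Set (Lit V)} {G : Set (Rule V)}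
    {R₀ : Set (ERule V)} :
    (((ELP.mk A E R₀).union (gadget A F Θ G)).eReduct Θ).A = A := by
  simp [ELP.union, ELP.eReduct, gadget]

/-- The force rules pin the guess of any CWV. -/
lemma pinning {P : ELP V} {Θ Θ' : Set (Lit V)} {M : Set (Set V)}
    (hsub : forceR P.E Θ ⊆ P.R) (hΘ : Θ ⊆ P.E)
    (h : P.isCWVwrt Θ' M) : Θ' = Θ := by
  obtain ⟨hΘ', hM, hne, hwit, hall⟩ := h
  obtain ⟨J, hJ⟩ := hne
  have hJas : J ∈ (P.eReduct Θ').AS := hM ▸ hJ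
  have hJmod := hJas.2.1
  ext ℓ
  constructor
  · -- ℓ ∈ Θ' → ℓ ∈ Θ
    intro hℓ'
    by_contra hℓ
    have hrule : (⟨∅, ∅, ∅⟩ : Rule V) ∈ (P.eReduct Θ').R := by
      refine ⟨fpos ℓ, hsub (Or.inr ⟨ℓ, ⟨hΘ' hℓ', hℓ⟩, rfl⟩), by simp [fpos], ?_⟩
      unfold fpos ERule.reduct
      have hdiff : ({ℓ} : Set (Lit V)) \ Θ' = ∅ :=
        Set.diff_eq_empty.mpr (by simpa using hℓ')
      simp [hdiff]
    have := hJmod _ hrule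
    unfold Rule.sat at this
    obtain ⟨a, ha, -⟩ := this ⟨by simp, by simp⟩
    exact ha
  · -- ℓ ∈ Θ → ℓ ∈ Θ'
    intro hℓ
    by_contra hℓ'
    have hrule : bRule ℓ.flip ∈ (P.eReduct Θ').R := by
      refine ⟨fneg ℓ, hsub (Or.inl ⟨ℓ, hℓ, rfl⟩), by simpa [fneg] using hℓ', ?_⟩
      unfold fneg ERule.reduct bRule
      simp
    have := (sat_bRule).mp (hJmod _ hrule)
    rw [flip_sat] at this
    exact this (hall ℓ ⟨hΘ hℓ, hℓ'⟩ J hJ)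

end Stmt12

namespace Stmt12

variable {V : Type}

@[simp] lemma flip_atom (ℓ : Lit V) : ℓ.flip.atom = ℓ.atom := by
  cases ℓ <;> rfl

lemma reduct_ratoms {r : ERule V} {A : Set V} {E Θ : Set (Lit V)}
    (hr : r.wf A E) (hE : ∀ ℓ ∈ E, ℓ.atom ∈ A) :
    ratoms (r.reduct Θ) A := by
  obtain ⟨h1, h2, h3, h4, h5⟩ := hr
  refine ⟨h1, h2, ?_⟩
  rintro ℓ ((h | h) | ⟨m, hm, rfl⟩)
  · exact h3 ℓ h
  · exact hE ℓ (h4 h.1)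
  · rw [flip_atom]; exact hE m (h5 hm)

lemma cons_of_compat {E EQ Θ : Set (Lit V)} {M : Set (Set V)}
    (h : compatible (E ∪ EQ) Θ M) : consistentGuess E (Θ ∩ E) := by
  intro a hp hn
  by_contra hc
  push_neg at hc
  obtain ⟨J, hJ⟩ := h.1
  have h1 := h.2.2 (Lit.pos a) ⟨Or.inl hp, fun hx => hc.1 ⟨hx, hp⟩⟩ J hJ
  have h2 := h.2.2 (Lit.neg a) ⟨Or.inl hn, fun hx => hc.2 ⟨hx, hn⟩⟩ J hJ
  exact h2 h1

lemma mem_eReduct_union_rules {P₁ P₂ : ELP V} {Θ : Set (Lit V)} {q : Rule V} :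
    q ∈ ((P₁.union P₂).eReduct Θ).R ↔
      ((∃ re ∈ P₁.R, (∀ ℓ ∈ re.eneg, ℓ ∉ Θ) ∧ q = re.reduct Θ) ∨
       (∃ re ∈ P₂.R, (∀ ℓ ∈ re.eneg, ℓ ∉ Θ) ∧ q = re.reduct Θ)) := by
  constructor
  · rintro ⟨re, hre, hsur, rfl⟩
    rcases mem_union_R.mp hre with h | h
    · exact Or.inl ⟨re, h, hsur, rfl⟩
    · exact Or.inr ⟨re, h, hsur, rfl⟩
  · rintro (⟨re, hre, hsur, rfl⟩ | ⟨re, hre, hsur, rfl⟩)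
    · exact ⟨re, mem_union_R.mpr (Or.inl hre), hsur, rfl⟩
    · exact ⟨re, mem_union_R.mpr (Or.inr hre), hsur, rfl⟩

/-- If the (single) extra reduct rule is universally satisfied, the two unions have
the same answer sets. -/
lemma AS_union_eq {A : Set V} {E : Set (Lit V)} {r : ERule V} {Q : ELP V}
    {Θ : Set (Lit V)}
    (hsat : ∀ I : Set V, (∀ ℓ ∈ r.eneg, ℓ ∉ Θ) → Rule.sat I (r.reduct Θ))
    (hred : ∀ Y X : Set V, X ⊆ Y → (∀ ℓ ∈ r.eneg, ℓ ∉ Θ) →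
      Rule.redSat Y X (r.reduct Θ)) :
    (((ELP.mk A E {r}).union Q).eReduct Θ).AS =
      (((ELP.mk A E (∅ : Set (ERule V))).union Q).eReduct Θ).AS := by
  have hRr : ∀ q : Rule V, q ∈ (((ELP.mk A E {r}).union Q).eReduct Θ).R ↔
      ((∀ ℓ ∈ r.eneg, ℓ ∉ Θ) ∧ q = r.reduct Θ) ∨
        (∃ re ∈ Q.R, (∀ ℓ ∈ re.eneg, ℓ ∉ Θ) ∧ q = re.reduct Θ) := by
    intro q
    rw [mem_eReduct_union_rules]
    constructor
    · rintro (⟨re, hre, h⟩ | h)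
      · rw [Set.mem_singleton_iff] at hre; subst hre; exact Or.inl h
      · exact Or.inr h
    · rintro (h | h)
      · exact Or.inl ⟨r, rfl, h⟩
      · exact Or.inr h
  have hRe : ∀ q : Rule V, q ∈ (((ELP.mk A E (∅ : Set (ERule V))).union Q).eReduct Θ).R ↔
      (∃ re ∈ Q.R, (∀ ℓ ∈ re.eneg, ℓ ∉ Θ) ∧ q = re.reduct Θ) := by
    intro q
    rw [mem_eReduct_union_rules]
    constructor
    · rintro (⟨re, hre, -⟩ | h)
      · exact absurd hre (Set.notMem_empty re)
      · exact h
    · exact fun h => Or.inr h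
  have hmod : ∀ I : Set V, (((ELP.mk A E {r}).union Q).eReduct Θ).model I ↔
      (((ELP.mk A E (∅ : Set (ERule V))).union Q).eReduct Θ).model I := by
    intro I
    constructor
    · intro h q hq
      exact h q ((hRr q).mpr (Or.inr ((hRe q).mp hq)))
    · intro h q hq
      rcases (hRr q).mp hq with ⟨hsur, rfl⟩ | hq'
      · exact hsat I hsur
      · exact h q ((hRe q).mpr hq')
  have hredm : ∀ Y X : Set V, X ⊆ Y →
      ((((ELP.mk A E {r}).union Q).eReduct Θ).redModel Y X ↔
       (((ELP.mk A E (∅ : Set (ERule V))).union Q).eReduct Θ).redModel Y X) := by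
    intro Y X hXY
    constructor
    · intro h q hq
      exact h q ((hRr q).mpr (Or.inr ((hRe q).mp hq)))
    · intro h q hq
      rcases (hRr q).mp hq with ⟨hsur, rfl⟩ | hq'
      · exact hred Y X hXY hsur
      · exact h q ((hRe q).mpr hq')
  ext I
  show Program.answerSet _ I ↔ Program.answerSet _ I
  unfold Program.answerSet
  constructor
  · rintro ⟨h1, h2, h3⟩
    refine ⟨h1, (hmod I).mp h2, fun ⟨M', hM', hrm⟩ =>
      h3 ⟨M', hM', (hredm I M' hM'.1).mpr hrm⟩⟩
  · rintro ⟨h1, h2, h3⟩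
    refine ⟨h1, (hmod I).mpr h2, fun ⟨M', hM', hrm⟩ =>
      h3 ⟨M', hM', (hredm I M' hM'.1).mp hrm⟩⟩

/-- The (⇐) direction of the theorem. -/
lemma mpr_dir {A : Set V} {E : Set (Lit V)} {r : ERule V}
    (hwf : (ELP.mk A E {r}).wf)
    (hSE : ∀ Φ ⊆ E, consistentGuess E Φ →
      (ELP.mk A E {r}).SEfun Φ = {p : Set V × Set V | p.1 ⊆ p.2 ∧ p.2 ⊆ A}) :
    ELP.strongELPCWVEq (ELP.mk A E {r}) (ELP.mk A E ∅) := by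
  have hrwf : r.wf A E := hwf.2 r rfl
  intro Q hQwf M
  -- the central AS-equality, available whenever the guess is compatible with some
  -- nonempty family
  have key : ∀ Θ : Set (Lit V), consistentGuess E (Θ ∩ E) →
      (((ELP.mk A E {r}).union Q).eReduct Θ).AS =
        (((ELP.mk A E (∅ : Set (ERule V))).union Q).eReduct Θ).AS := by
    intro Θ hcons
    by_cases hsurv : ∀ ℓ ∈ r.eneg, ℓ ∉ Θ
    · -- the rule survives; use the SE-hypothesis
      have hS := hSE (Θ ∩ E) Set.inter_subset_right hcons
      have hsurv' : ∀ ℓ ∈ r.eneg, ℓ ∉ Θ ∩ E := fun m hm hc => hsurv m hm hc.1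
      have hmemq : r.reduct (Θ ∩ E) ∈ ((ELP.mk A E {r}).eReduct (Θ ∩ E)).R :=
        ⟨r, rfl, hsurv', rfl⟩
      have hats : ratoms (r.reduct Θ) A := reduct_ratoms hrwf hwf.1
      have hqq : r.reduct Θ = r.reduct (Θ ∩ E) := reduct_inter hrwf.2.2.2.1
      refine AS_union_eq ?_ ?_
      · intro I _
        have hp : ((I ∩ A, I ∩ A) : Set V × Set V) ∈ (ELP.mk A E {r}).SEfun (Θ ∩ E) := by
          rw [hS]; exact ⟨subset_rfl, Set.inter_subset_right⟩
        have hm := hp.2.2.2.1 _ hmemq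
        rw [← hqq] at hm
        exact (sat_inter hats).mp hm
      · intro Y X hXY _
        have hp : ((X ∩ A, Y ∩ A) : Set V × Set V) ∈ (ELP.mk A E {r}).SEfun (Θ ∩ E) := by
          rw [hS]
          exact ⟨Set.inter_subset_inter_left A hXY, Set.inter_subset_right⟩
        have hm := hp.2.2.2.2 _ hmemq
        rw [← hqq] at hm
        exact redSat_inter hats hm
    · -- the rule is deleted on both sides
      refine AS_union_eq ?_ ?_
      · exact fun I h => absurd h hsurv
      · exact fun Y X _ h => absurd h hsurv
  constructor
  · rintro ⟨Θ, hΘE, hMAS, hcompat⟩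
    have hcons := cons_of_compat (EQ := Q.E) hcompat
    exact ⟨Θ, hΘE, hMAS.trans (key Θ hcons), hcompat⟩
  · rintro ⟨Θ, hΘE, hMAS, hcompat⟩
    have hcons := cons_of_compat (EQ := Q.E) hcompat
    exact ⟨Θ, hΘE, hMAS.trans (key Θ hcons).symm, hcompat⟩

end Stmt12

namespace Stmt12

variable {V : Type}

/-- the canonical guess determined by an intended family of members. -/
def thetaOf (A : Set V) (M : Set (Set V)) : Set (Lit V) :=
  {ℓ | ℓ.atom ∈ A ∧ ∃ J ∈ M, ¬ ℓ.sat J}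

lemma thetaOf_subset {A : Set V} {M : Set (Set V)} : thetaOf A M ⊆ litsOf A :=
  fun _ h => h.1

lemma sat_of_not_thetaOf {A : Set V} {M : Set (Set V)} {ℓ : Lit V} {J : Set V}
    (hA : ℓ.atom ∈ A) (hℓ : ℓ ∉ thetaOf A M) (hJ : J ∈ M) : ℓ.sat J := by
  by_contra hc
  exact hℓ ⟨hA, J, hJ, hc⟩

lemma compat_thetaOf {A : Set V} {E : Set (Lit V)} {M : Set (Set V)}
    (hE : E ⊆ litsOf A) (hne : M.Nonempty) :
    compatible (E ∪ litsOf A) (thetaOf A M) M := by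
  refine ⟨hne, fun ℓ hℓ => hℓ.2, fun ℓ hℓ J hJ => ?_⟩
  have hA : ℓ.atom ∈ A := by
    rcases hℓ.1 with h | h
    · exact hE h
    · exact h
  exact sat_of_not_thetaOf hA hℓ.2 hJ

/-- Central contradiction schema: if the r-side union with the gadget has answer sets
`M` (containing `Y`) while `Y` is not an answer set of the ∅-side union, then strong
equivalence fails. -/
lemma gadget_contra {A : Set V} {E : Set (Lit V)} {r : ERule V}
    (hwf : (ELP.mk A E {r}).wf)
    (heq : ELP.strongELPCWVEq (ELP.mk A E {r}) (ELP.mk A E ∅))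
    (M : Set (Set V)) (Y : Set V) (hYM : Y ∈ M)
    (G : Set (Rule V)) (hG : ∀ g ∈ G, ratoms g A)
    (hASr : (((ELP.mk A E {r}).union
        (gadget A (litsOf A) (thetaOf A M) G)).eReduct (thetaOf A M)).AS = M)
    (hYe : Y ∉ (((ELP.mk A E (∅ : Set (ERule V))).union
        (gadget A (litsOf A) (thetaOf A M) G)).eReduct (thetaOf A M)).AS) :
    False := by
  set Θ := thetaOf A M with hΘdef
  set Qg := gadget A (litsOf A) Θ G with hQdef
  have hE' : E ⊆ litsOf A := fun ℓ hℓ => hwf.1 ℓ hℓ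
  have hEU : E ∪ litsOf A = litsOf A := Set.union_eq_self_of_subset_left hE'
  have hQwf : Qg.wf := gadget_wf (fun _ h => h) thetaOf_subset hG
  have hcompat : compatible (E ∪ litsOf A) Θ M := compat_thetaOf hE' ⟨Y, hYM⟩
  -- M is a CWV of the r-side union
  have hcwv1 : ((ELP.mk A E {r}).union Qg).isCWV M := by
    refine ⟨Θ, ?_, hASr.symm, ?_⟩
    · show Θ ⊆ E ∪ Qg.E
      exact fun ℓ hℓ => Or.inr (thetaOf_subset hℓ)
    · exact hcompat
  -- hence of the ∅-side union
  have hcwv2 := (heq Qg hQwf M).mp hcwv1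
  obtain ⟨Θ'', hcwv⟩ := hcwv2
  have hEeq : ((ELP.mk A E (∅ : Set (ERule V))).union Qg).E = litsOf A := hEU
  have hpin : Θ'' = Θ := by
    refine pinning (P := (ELP.mk A E (∅ : Set (ERule V))).union Qg) ?_ ?_ hcwv
    · rw [hEeq]
      intro re hre
      exact mem_union_R.mpr (Or.inr (Set.mem_union_left _ hre))
    · rw [hEeq]; exact thetaOf_subset
  rw [hpin] at hcwv
  exact hYe (hcwv.2.1 ▸ hYM)

/-! ### The choice-program construction: realizability and universal modelhood -/

/-- full choice rules over `A`. -/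
def CHall (A : Set V) : Set (Rule V) := {q | ∃ a ∈ A, q = ⟨{a}, ∅, {Lit.neg a}⟩}

lemma CHall_ratoms {A : Set V} : ∀ g ∈ CHall A, ratoms g A := by
  rintro g ⟨a, ha, rfl⟩
  exact ⟨by simpa using ha, by simp, by simpa [Lit.atom] using ha⟩

/-- the box of a guess. -/
def BoxE (A : Set V) (E Φ : Set (Lit V)) : Set (Set V) :=
  {J | J ⊆ A ∧ ∀ ℓ ∈ E \ Φ, ℓ.sat J}

lemma AS_choice {A : Set V} {E Φ : Set (Lit V)} :
    (((ELP.mk A E (∅ : Set (ERule V))).union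
        (gadget A E Φ (CHall A))).eReduct Φ).AS = BoxE A E Φ := by
  ext J
  constructor
  · rintro ⟨hJA, hmod, -⟩
    rw [union_gadget_A] at hJA
    refine ⟨hJA, fun ℓ hℓ => ?_⟩
    have hq : bRule ℓ ∈ (((ELP.mk A E (∅ : Set (ERule V))).union
        (gadget A E Φ (CHall A))).eReduct Φ).R :=
      mem_redrules.mpr (Or.inr (Or.inl ⟨ℓ, hℓ, rfl⟩))
    exact sat_bRule.mp (hmod _ hq)
  · rintro ⟨hJA, hbox⟩
    refine ⟨by rw [union_gadget_A]; exact hJA, ?_, ?_⟩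
    · intro q hq
      rcases mem_redrules.mp hq with ⟨re, hre, -⟩ | ⟨ℓ, hℓ, rfl⟩ | ⟨a, ha, rfl⟩
      · exact absurd hre (Set.notMem_empty re)
      · exact sat_bRule.mpr (hbox ℓ hℓ)
      · exact sat_select rfl
    · rintro ⟨M', hM', hrm⟩
      obtain ⟨a, haJ, haM⟩ := Set.exists_of_ssubset hM'
      have hq : (⟨{a}, ∅, {Lit.neg a}⟩ : Rule V) ∈ (((ELP.mk A E (∅ : Set (ERule V))).union
          (gadget A E Φ (CHall A))).eReduct Φ).R :=
        mem_redrules.mpr (Or.inr (Or.inr ⟨a, hJA haJ, rfl⟩))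
      have := hrm _ hq
      unfold Rule.redSat at this
      obtain ⟨b, hb, hbM⟩ := this (by simpa [Lit.sat] using haJ) (by simp)
      rw [Set.mem_singleton_iff] at hb
      subst hb
      exact haM hbM

lemma Fin_mem_BoxE {A : Set V} {E Φ : Set (Lit V)}
    (hE : ∀ ℓ ∈ E, ℓ.atom ∈ A) (hcons : consistentGuess E Φ) :
    {a | Lit.pos a ∈ E \ Φ} ∈ BoxE A E Φ := by
  constructor
  · intro a ha; exact hE _ ha.1
  · intro ℓ hℓ
    cases ℓ with
    | pos a => exact hℓ
    | neg a =>
        simp only [Lit.sat, Set.mem_setOf_eq]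
        intro hc
        rcases hcons a hc.1 hℓ.1 with h | h
        · exact hc.2 h
        · exact hℓ.2 h

lemma Fin_insert_mem_BoxE {A : Set V} {E Φ : Set (Lit V)} {b : V}
    (hE : ∀ ℓ ∈ E, ℓ.atom ∈ A) (hcons : consistentGuess E Φ)
    (hb : Lit.neg b ∈ Φ) (hbA : b ∈ A) :
    insert b {a | Lit.pos a ∈ E \ Φ} ∈ BoxE A E Φ := by
  constructor
  · intro a ha
    rcases ha with rfl | ha
    · exact hbA
    · exact hE _ ha.1
  · intro ℓ hℓ
    cases ℓ with
    | pos a => exact Or.inr hℓ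
    | neg a =>
        simp only [Lit.sat, Set.mem_insert_iff, Set.mem_setOf_eq]
        rintro (rfl | hc)
        · exact hℓ.2 hb
        · rcases hcons a hc.1 hℓ.1 with h | h
          · exact hc.2 h
          · exact hℓ.2 h

end Stmt12

namespace Stmt12

variable {V : Type}

lemma cons_mono {E Φ Ψ : Set (Lit V)} (h : Φ ⊆ Ψ) (hc : consistentGuess E Φ) :
    consistentGuess E Ψ := fun a hp hn => (hc a hp hn).imp (@h _) (@h _)

lemma compat_BoxE {A : Set V} {E Φ : Set (Lit V)}
    (hE : ∀ ℓ ∈ E, ℓ.atom ∈ A) (hΦE : Φ ⊆ E) (hcons : consistentGuess E Φ) :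
    compatible E Φ (BoxE A E Φ) := by
  refine ⟨⟨_, Fin_mem_BoxE hE hcons⟩, ?_, fun ℓ hℓ J hJ => hJ.2 ℓ hℓ⟩
  intro ℓ hℓ
  cases ℓ with
  | pos a =>
      refine ⟨_, Fin_mem_BoxE hE hcons, ?_⟩
      simp only [Lit.sat, Set.mem_setOf_eq]
      exact fun hc => hc.2 hℓ
  | neg a =>
      refine ⟨_, Fin_insert_mem_BoxE hE hcons hℓ (hE _ (hΦE hℓ)), ?_⟩
      simp [Lit.sat]

/-- From strong equivalence: the box is exactly the answer sets of the r-side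
choice construction. -/
lemma core_AS {A : Set V} {E : Set (Lit V)} {r : ERule V}
    (hwf : (ELP.mk A E {r}).wf)
    (heq : ELP.strongELPCWVEq (ELP.mk A E {r}) (ELP.mk A E ∅))
    {Φ : Set (Lit V)} (hΦE : Φ ⊆ E) (hcons : consistentGuess E Φ) :
    (((ELP.mk A E {r}).union (gadget A E Φ (CHall A))).eReduct Φ).AS = BoxE A E Φ := by
  set Qg := gadget A E Φ (CHall A) with hQdef
  have hQwf : Qg.wf := gadget_wf hwf.1 hΦE CHall_ratoms
  have hcompatB : compatible E Φ (BoxE A E Φ) := compat_BoxE hwf.1 hΦE hcons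
  have hEE : E ∪ E = E := Set.union_self E
  have hcwv0 : ((ELP.mk A E (∅ : Set (ERule V))).union Qg).isCWV (BoxE A E Φ) := by
    refine ⟨Φ, ?_, AS_choice.symm, ?_⟩
    · exact fun ℓ hℓ => Or.inl (hΦE hℓ)
    · show compatible (E ∪ E) Φ _
      rw [hEE]
      exact hcompatB
  have hcwv1 := (heq Qg hQwf (BoxE A E Φ)).mpr hcwv0
  obtain ⟨Θ'', hcwv⟩ := hcwv1
  have hpin : Θ'' = Φ := by
    refine pinning (P := (ELP.mk A E {r}).union Qg) ?_ ?_ hcwv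
    · show forceR (E ∪ E) Φ ⊆ _
      rw [hEE]
      intro re hre
      exact mem_union_R.mpr (Or.inr (Set.mem_union_left _ hre))
    · show Φ ⊆ E ∪ E
      rw [hEE]; exact hΦE
  rw [hpin] at hcwv
  exact hcwv.2.1.symm

/-- From strong equivalence: every box member models the reduct of `r`. -/
lemma core_model {A : Set V} {E : Set (Lit V)} {r : ERule V}
    (hwf : (ELP.mk A E {r}).wf)
    (heq : ELP.strongELPCWVEq (ELP.mk A E {r}) (ELP.mk A E ∅))
    {Φ : Set (Lit V)} (hΦE : Φ ⊆ E) (hcons : consistentGuess E Φ)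
    (hsurv : ∀ ℓ ∈ r.eneg, ℓ ∉ Φ) {J : Set V} (hJ : J ∈ BoxE A E Φ) :
    Rule.sat J (r.reduct Φ) := by
  rw [← core_AS hwf heq hΦE hcons] at hJ
  exact hJ.2.1 _ (mem_redrules.mpr (Or.inl ⟨r, rfl, hsurv, rfl⟩))

/-- From strong equivalence: every consistent guess is realizable. -/
lemma core_realizable {A : Set V} {E : Set (Lit V)} {r : ERule V}
    (hwf : (ELP.mk A E {r}).wf)
    (heq : ELP.strongELPCWVEq (ELP.mk A E {r}) (ELP.mk A E ∅))
    {Φ : Set (Lit V)} (hΦE : Φ ⊆ E) (hcons : consistentGuess E Φ) :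
    (ELP.mk A E {r}).realizable Φ := by
  refine ⟨BoxE A E Φ, ?_, compat_BoxE hwf.1 hΦE hcons⟩
  intro J hJ
  refine ⟨hJ.1, ?_⟩
  rintro q ⟨re, hre, hsur, rfl⟩
  rw [Set.mem_singleton_iff] at hre
  subst hre
  exact core_model hwf heq hΦE hcons hsur hJ

lemma reduct_neg_mono {r : ERule V} {Φ Ψ : Set (Lit V)} (h : Φ ⊆ Ψ) :
    (r.reduct Ψ).neg ⊆ (r.reduct Φ).neg := by
  rintro m ((hm | hm) | hm)
  · exact Or.inl (Or.inl hm)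
  · exact Or.inl (Or.inr ⟨hm.1, fun hc => hm.2 (h hc)⟩)
  · exact Or.inr hm

/-- Goal 2: from strong equivalence, every interpretation models every surviving
reduct of `r`. -/
lemma core_allmodels {A : Set V} {E : Set (Lit V)} {r : ERule V}
    (hwf : (ELP.mk A E {r}).wf)
    (heq : ELP.strongELPCWVEq (ELP.mk A E {r}) (ELP.mk A E ∅))
    {Φ : Set (Lit V)} (hΦE : Φ ⊆ E) (hcons : consistentGuess E Φ)
    (hsurv : ∀ ℓ ∈ r.eneg, ℓ ∉ Φ) {J : Set V} (hJA : J ⊆ A) :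
    Rule.sat J (r.reduct Φ) := by
  by_contra hns
  unfold Rule.sat at hns
  push_neg at hns
  obtain ⟨⟨hpos, hneg⟩, hhead⟩ := hns
  set Ψ := Φ ∪ {ℓ | ℓ ∈ E \ Φ ∧ ¬ ℓ.sat J} with hΨdef
  have hΦΨ : Φ ⊆ Ψ := Set.subset_union_left
  have hΨE : Ψ ⊆ E := by
    rintro ℓ (h | h)
    · exact hΦE h
    · exact h.1.1
  have hconsΨ : consistentGuess E Ψ := cons_mono hΦΨ hcons
  have hsurvΨ : ∀ ℓ ∈ r.eneg, ℓ ∉ Ψ := by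
    rintro m hm (hc | hc)
    · exact hsurv m hm hc
    · refine hc.2 ?_
      have := hneg m.flip (Or.inr ⟨m, hm, rfl⟩)
      rw [flip_sat, not_not] at this
      exact this
  have hJbox : J ∈ BoxE A E Ψ := by
    refine ⟨hJA, fun ℓ hℓ => ?_⟩
    by_contra hc
    exact hℓ.2 (Or.inr ⟨⟨hℓ.1, fun hx => hℓ.2 (Or.inl hx)⟩, hc⟩)
  have hsat := core_model hwf heq hΨE hconsΨ hsurvΨ hJbox
  obtain ⟨a, ha, haJ⟩ := hsat ⟨hpos, fun m hm => hneg m (reduct_neg_mono hΦΨ hm)⟩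
  exact hhead a ha haJ

end Stmt12

namespace Stmt12

variable {V : Type}

/-! ### Goal 3, construction R2 (no outside-`Y` epistemic witnesses needed) -/

/-- atoms whose positive literal occurs in `eneg` -/
def EpS (r : ERule V) : Set V := {c | Lit.pos c ∈ r.eneg}
/-- atoms whose negative literal occurs in `eneg` -/
def EnS (r : ERule V) : Set V := {c | Lit.neg c ∈ r.eneg}
/-- `H ∩ Y` -/
def HYs (r : ERule V) (Y : Set V) : Set V := r.head ∩ Y
/-- `X = Y \ H` -/
def Xs (r : ERule V) (Y : Set V) : Set V := Y \ r.head
/-- positive epistemic literals satisfied by `Y` -/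
def PAs (r : ERule V) (Y : Set V) : Set V := {a | Lit.pos a ∈ r.epos ∧ a ∈ Y}
def PAm (r : ERule V) (Y : Set V) : Set V := PAs r Y \ r.head
def PAH (r : ERule V) (Y : Set V) : Set V := PAs r Y ∩ r.head
def T2 (r : ERule V) (Y : Set V) : Set V := EpS r ∩ HYs r Y
def Z2 (r : ERule V) (Y : Set V) : Set V := HYs r Y \ EpS r

lemma Xs_union_HYs (r : ERule V) (Y : Set V) : Xs r Y ∪ HYs r Y = Y := by
  ext d; simp only [Xs, HYs, Set.mem_union, Set.mem_diff, Set.mem_inter_iff]; tauto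

lemma Y_diff_HYs (r : ERule V) (Y : Set V) : Y \ HYs r Y = Xs r Y := by
  ext d; simp only [Xs, HYs, Set.mem_diff, Set.mem_inter_iff]; tauto

lemma V2_eq (r : ERule V) (Y : Set V) : Xs r Y ∪ T2 r Y = Y \ Z2 r Y := by
  ext d
  simp only [Xs, T2, Z2, HYs, Set.mem_union, Set.mem_diff, Set.mem_inter_iff]
  tauto

/-- the members of the intended CWV for construction R2. -/
def R2M (r : ERule V) (Y : Set V) : Set (Set V) :=
  {K | K = Y ∨ (∃ a' ∈ PAm r Y, K = Y \ {a'}) ∨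
    ((PAH r Y).Nonempty ∧ K = Xs r Y ∪ T2 r Y)}

/-- the plain gadget rules for construction R2. -/
def R2G (A Y : Set V) (r : ERule V) : Set (Rule V) :=
  {q | (∃ w ∈ A \ HYs r Y, q = ⟨{w}, ∅, {Lit.neg w}⟩) ∨
       (∃ w ∈ HYs r Y, ∃ h ∈ HYs r Y, q = ⟨{w}, insert h (Xs r Y), {Lit.neg w}⟩) ∨
       (∃ h ∈ HYs r Y, ∃ a' ∈ PAm r Y, q = ⟨{h}, ∅, insert (Lit.pos a') {Lit.neg h}⟩) ∨
       ((PAH r Y).Nonempty ∧ ∃ t ∈ HYs r Y,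
          q = ⟨{t}, ∅, insert (Lit.neg t) (Lit.pos '' Z2 r Y)⟩) ∨
       (∃ a' ∈ PAm r Y, ∃ a'' ∈ PAm r Y, a' ≠ a'' ∧
          q = ⟨∅, ∅, {Lit.pos a', Lit.pos a''}⟩) ∨
       (∃ h ∈ Z2 r Y, ∃ h' ∈ Z2 r Y, h ≠ h' ∧ q = ⟨∅, {h'}, {Lit.pos h}⟩) ∨
       (∃ a' ∈ PAm r Y, ∃ h ∈ Z2 r Y, q = ⟨∅, ∅, {Lit.pos a', Lit.pos h}⟩)}

lemma R2G_ratoms {A Y : Set V} {r : ERule V} (hYA : Y ⊆ A) :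
    ∀ g ∈ R2G A Y r, ratoms g A := by
  have hHY : HYs r Y ⊆ A := fun d hd => hYA hd.2
  have hX : Xs r Y ⊆ A := fun d hd => hYA hd.1
  have hPAm : PAm r Y ⊆ A := fun d hd => hYA hd.1.2
  have hZ : Z2 r Y ⊆ A := fun d hd => hHY hd.1
  rintro g (⟨w, hw, rfl⟩ | ⟨w, hw, h, hh, rfl⟩ | ⟨h, hh, a', ha', rfl⟩ |
    ⟨hne, t, ht, rfl⟩ | ⟨a', ha', a'', ha'', hne, rfl⟩ | ⟨h, hh, h', hh', hne, rfl⟩ |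
    ⟨a', ha', h, hh, rfl⟩)
  · exact ⟨by simpa using hw.1, by simp, by simpa [Lit.atom] using hw.1⟩
  · refine ⟨by simpa using hHY hw, ?_, by simpa [Lit.atom] using hHY hw⟩
    intro d hd
    rcases hd with rfl | hd
    · exact hHY hh
    · exact hX hd
  · refine ⟨by simpa using hHY hh, by simp, ?_⟩
    rintro ℓ (rfl | rfl)
    · exact hPAm ha'
    · simpa [Lit.atom] using hHY hh
  · refine ⟨by simpa using hHY ht, by simp, ?_⟩
    rintro ℓ (rfl | ⟨z, hz, rfl⟩)
    · simpa [Lit.atom] using hHY ht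
    · simpa [Lit.atom] using hZ hz
  · refine ⟨by simp, by simp, ?_⟩
    rintro ℓ (rfl | rfl)
    · exact hPAm ha'
    · exact hPAm ha''
  · refine ⟨by simp, ?_, ?_⟩
    · intro d hd; rcases hd with rfl; exact hZ hh'
    · rintro ℓ rfl; exact hZ hh
  · refine ⟨by simp, by simp, ?_⟩
    rintro ℓ (rfl | rfl)
    · exact hPAm ha'
    · exact hZ hh

end Stmt12

namespace Stmt12

variable {V : Type}

lemma redSat_of_negsat {Y X : Set V} {q : Rule V} {m : Lit V}
    (hm : m ∈ q.neg) (h : m.sat Y) : q.redSat Y X :=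
  fun hn => absurd h (hn m hm)

lemma redSat_of_posfail {Y X : Set V} {q : Rule V} {a : V}
    (ha : a ∈ q.pos) (h : a ∉ X) : q.redSat Y X :=
  fun _ hp => absurd (hp ha) h

lemma cons_thetaOf_inter {A : Set V} {E : Set (Lit V)} {M : Set (Set V)} {Y : Set V}
    (hE : ∀ ℓ ∈ E, ℓ.atom ∈ A) (hY : Y ∈ M) :
    consistentGuess E (thetaOf A M ∩ E) := by
  intro a hp hn
  by_cases haY : a ∈ Y
  · exact Or.inr ⟨⟨hE _ hn, Y, hY, fun hc => hc haY⟩, hn⟩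
  · exact Or.inl ⟨⟨hE _ hp, Y, hY, haY⟩, hp⟩

lemma R2_contra {A : Set V} {E : Set (Lit V)} {r : ERule V}
    (hwf : (ELP.mk A E {r}).wf)
    (heq : ELP.strongELPCWVEq (ELP.mk A E {r}) (ELP.mk A E ∅))
    {Φ₀ : Set (Lit V)} (hΦ₀E : Φ₀ ⊆ E)
    (hsurv₀ : ∀ ℓ ∈ r.eneg, ℓ ∉ Φ₀)
    {Y : Set V} (hYA : Y ⊆ A)
    (hact : ∀ m ∈ (r.reduct Φ₀).neg, ¬ m.sat Y)
    (hB : r.opos ⊆ Xs r Y)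
    (hHY : (HYs r Y).Nonempty)
    (hNA : ∀ a, Lit.neg a ∈ r.epos → a ∈ Y) :
    False := by
  have hrwf : r.wf A E := hwf.2 r rfl
  have hEA := hwf.1
  have hepE : r.epos ⊆ E := hrwf.2.2.2.1
  have henE : r.eneg ⊆ E := hrwf.2.2.2.2
  have hHA : r.head ⊆ A := hrwf.1
  set M : Set (Set V) := R2M r Y with hMdef
  set Θ : Set (Lit V) := thetaOf A M with hΘdef
  -- basic facts about Y and the eneg literals
  have hEpY : EpS r ⊆ Y := by
    intro c hc
    have h := hact ((Lit.pos c).flip) (Or.inr ⟨Lit.pos c, hc, rfl⟩)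
    rw [flip_sat, not_not] at h
    exact h
  have hEnY : ∀ c ∈ EnS r, c ∉ Y := by
    intro c hc
    have h := hact ((Lit.neg c).flip) (Or.inr ⟨Lit.neg c, hc, rfl⟩)
    rw [flip_sat, not_not] at h
    exact h
  have hPAEp : ∀ a ∈ PAs r Y, a ∉ EpS r := by
    intro a ha hc
    have hΦ : Lit.pos a ∈ Φ₀ := by
      by_contra hn
      exact hact (Lit.pos a) (Or.inl (Or.inr ⟨ha.1, hn⟩)) ha.2
    exact hsurv₀ _ hc hΦ
  -- membership of the three member shapes
  have hYM : Y ∈ M := Or.inl rfl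
  have hVM : ∀ a' ∈ PAm r Y, Y \ {a'} ∈ M := fun a' h => Or.inr (Or.inl ⟨a', h, rfl⟩)
  have hV2M : (PAH r Y).Nonempty → Xs r Y ∪ T2 r Y ∈ M :=
    fun h => Or.inr (Or.inr ⟨h, rfl⟩)
  have hMsubY : ∀ K ∈ M, K ⊆ Y := by
    rintro K (rfl | ⟨a', ha', rfl⟩ | ⟨hne, rfl⟩)
    · exact subset_rfl
    · exact Set.diff_subset
    · exact Set.union_subset (fun d hd => hd.1) (fun d hd => hd.2.2)
  have hMsubA : ∀ K ∈ M, K ⊆ A := fun K hK => (hMsubY K hK).trans hYA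
  -- all members satisfy all eneg literals
  have hensat : ∀ m ∈ r.eneg, ∀ K ∈ M, m.sat K := by
    intro m hm K hK
    cases m with
    | pos c =>
        show c ∈ K
        rcases hK with rfl | ⟨a', ha', rfl⟩ | ⟨hne, rfl⟩
        · exact hEpY hm
        · exact ⟨hEpY hm, fun hc => hPAEp a' ha'.1 (Set.mem_singleton_iff.mp hc ▸ hm)⟩
        · by_cases hch : c ∈ r.head
          · exact Or.inr ⟨hm, hch, hEpY hm⟩
          · exact Or.inl ⟨hEpY hm, hch⟩
    | neg c =>
        show c ∉ K
        exact fun hcK => hEnY c hm (hMsubY K hK hcK)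
  have hsurvΘ : ∀ m ∈ r.eneg, m ∉ Θ := by
    rintro m hm ⟨hA, K, hK, hviol⟩
    exact hviol (hensat m hm K hK)
  -- all epos literals are in the guess
  have hepΘ : r.epos ⊆ Θ := by
    intro m hm
    have hA : m.atom ∈ A := hEA _ (hepE hm)
    cases m with
    | pos a =>
        by_cases haY : a ∈ Y
        · by_cases haH : a ∈ r.head
          · have hne : (PAH r Y).Nonempty := ⟨a, ⟨hm, haY⟩, haH⟩
            refine ⟨hA, _, hV2M hne, ?_⟩
            rintro (hc | hc)
            · exact hc.2 haH
            · exact hPAEp a ⟨hm, haY⟩ hc.1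
          · have ham : a ∈ PAm r Y := ⟨⟨hm, haY⟩, haH⟩
            refine ⟨hA, _, hVM a ham, ?_⟩
            exact fun hc => hc.2 rfl
        · exact ⟨hA, Y, hYM, haY⟩
    | neg a =>
        exact ⟨hA, Y, hYM, fun hc => hc (hNA a hm)⟩
  have hact2 : ∀ m ∈ (r.reduct Θ).neg, ¬ m.sat Y := by
    rintro m ((h | h) | h)
    · exact hact m (Or.inl (Or.inl h))
    · exact absurd (hepΘ h.1) h.2
    · exact hact m (Or.inr h)
  have hq2sat : ∀ J : Set V, J ⊆ A → Rule.sat J (r.reduct Θ) := by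
    intro J hJA
    rw [reduct_inter hepE]
    exact core_allmodels hwf heq Set.inter_subset_right (cons_thetaOf_inter hEA hYM)
      (fun m hm hc => hsurvΘ m hm hc.1) hJA
  -- handy set facts
  have hHYY : HYs r Y ⊆ Y := Set.inter_subset_right
  have hHYH : HYs r Y ⊆ r.head := Set.inter_subset_left
  have hXsY : Xs r Y ⊆ Y := Set.diff_subset
  have hXH : ∀ d ∈ Xs r Y, d ∉ r.head := fun d hd => hd.2
  have hPAmY : PAm r Y ⊆ Y := fun a h => h.1.2
  have hPAmH : ∀ a ∈ PAm r Y, a ∉ r.head := fun a h => h.2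
  have hPAmX : PAm r Y ⊆ Xs r Y := fun a h => ⟨h.1.2, h.2⟩
  have hZHY : Z2 r Y ⊆ HYs r Y := Set.diff_subset
  have hZY : Z2 r Y ⊆ Y := fun h hh => hHYY (hZHY hh)
  have hZH : Z2 r Y ⊆ r.head := fun h hh => hHYH (hZHY hh)
  have hT2HY : T2 r Y ⊆ HYs r Y := Set.inter_subset_right
  have hV2Z : ∀ z ∈ Z2 r Y, z ∉ Xs r Y ∪ T2 r Y := by
    intro z hz hc
    rw [V2_eq] at hc
    exact hc.2 hz
  have hXHY : ∀ d ∈ Xs r Y, d ∉ HYs r Y := fun d hd hc => hd.2 hc.1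
  -- rule membership characterizations
  have hmemr : ∀ q : Rule V,
      q ∈ (((ELP.mk A E {r}).union (gadget A (litsOf A) Θ (R2G A Y r))).eReduct Θ).R ↔
      (((∀ ℓ ∈ r.eneg, ℓ ∉ Θ) ∧ q = r.reduct Θ) ∨
        (∃ ℓ ∈ litsOf A \ Θ, q = bRule ℓ) ∨ q ∈ R2G A Y r) := by
    intro q
    rw [mem_redrules]
    constructor
    · rintro (⟨re, hre, h⟩ | h)
      · rw [Set.mem_singleton_iff] at hre
        subst hre
        exact Or.inl h
      · exact Or.inr h
    · rintro (h | h)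
      · exact Or.inl ⟨r, rfl, h⟩
      · exact Or.inr h
  have hmeme : ∀ q : Rule V,
      q ∈ (((ELP.mk A E (∅ : Set (ERule V))).union
        (gadget A (litsOf A) Θ (R2G A Y r))).eReduct Θ).R ↔
      ((∃ ℓ ∈ litsOf A \ Θ, q = bRule ℓ) ∨ q ∈ R2G A Y r) := by
    intro q
    rw [mem_redrules]
    constructor
    · rintro (⟨re, hre, h⟩ | h)
      · exact absurd hre (Set.notMem_empty re)
      · exact h
    · exact fun h => Or.inr h
  -- all members are models of the r-side reduct
  have hmodM : ∀ K ∈ M,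
      (((ELP.mk A E {r}).union (gadget A (litsOf A) Θ (R2G A Y r))).eReduct Θ).model K := by
    intro K hK q hq
    rcases (hmemr q).mp hq with ⟨hsur, rfl⟩ | ⟨ℓ, hℓ, rfl⟩ | hG
    · exact hq2sat K (hMsubA K hK)
    · exact sat_bRule.mpr (sat_of_not_thetaOf hℓ.1 hℓ.2 hK)
    · rcases hG with ⟨w, hw, rfl⟩ | ⟨w, hw, h, hh, rfl⟩ | ⟨h, hh, a', ha', rfl⟩ |
        ⟨hne, t, ht, rfl⟩ | ⟨a', ha', a'', ha'', hnee, rfl⟩ | ⟨h, hh, h', hh', hnee, rfl⟩ |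
        ⟨a', ha', h, hh, rfl⟩
      · exact sat_select rfl
      · exact sat_select rfl
      · exact sat_select (Or.inr rfl)
      · exact sat_select (Or.inl rfl)
      · -- constraint (i)
        rw [sat_constraint]
        rintro ⟨-, hall⟩
        rcases hK with rfl | ⟨b, hb, rfl⟩ | ⟨hne2, rfl⟩
        · exact hall _ (Or.inl rfl) (hPAmY ha')
        · by_cases hab : a' = b
          · subst hab
            exact hall _ (Or.inr rfl) ⟨hPAmY ha'', fun hc => hnee (Set.mem_singleton_iff.mp hc).symm⟩
          · exact hall _ (Or.inl rfl) ⟨hPAmY ha', fun hc => hab (Set.mem_singleton_iff.mp hc)⟩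
        · exact hall _ (Or.inl rfl) (Or.inl (hPAmX ha'))
      · -- constraint (A')
        rw [sat_constraint]
        rintro ⟨hsub, hall⟩
        rcases hK with rfl | ⟨b, hb, rfl⟩ | ⟨hne2, rfl⟩
        · exact hall _ rfl (hZY hh)
        · exact hall _ rfl ⟨hZY hh, fun hc =>
            hPAmH b hb (hZH (Set.mem_singleton_iff.mp hc ▸ hh))⟩
        · exact hV2Z h' hh' (hsub rfl)
      · -- constraint (B)
        rw [sat_constraint]
        rintro ⟨-, hall⟩
        rcases hK with rfl | ⟨b, hb, rfl⟩ | ⟨hne2, rfl⟩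
        · exact hall _ (Or.inl rfl) (hPAmY ha')
        · by_cases hab : a' = b
          · subst hab
            exact hall _ (Or.inr rfl) ⟨hZY hh, fun hc =>
              hPAmH a' ha' (hZH (Set.mem_singleton_iff.mp hc ▸ hh))⟩
          · exact hall _ (Or.inl rfl) ⟨hPAmY ha', fun hc => hab (Set.mem_singleton_iff.mp hc)⟩
        · exact hall _ (Or.inl rfl) (Or.inl (hPAmX ha'))
  -- per-member minimality on the r-side
  have hminY : ¬ ∃ M', M' ⊂ Y ∧
      (((ELP.mk A E {r}).union (gadget A (litsOf A) Θ (R2G A Y r))).eReduct Θ).redModel Y M' := by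
    rintro ⟨M', hss, hrm⟩
    rw [Set.ssubset_def] at hss
    have hXM' : Xs r Y ⊆ M' := by
      intro w hw
      have hq := hrm _ ((hmemr _).mpr (Or.inr (Or.inr (Or.inl
        ⟨w, ⟨hYA (hXsY hw), hXHY w hw⟩, rfl⟩))))
      obtain ⟨b, hb, hbM⟩ := hq (by rintro m rfl; exact fun hc => hc (hXsY hw)) (by simp)
      rwa [Set.mem_singleton_iff.mp hb] at hbM
    have hq2 := hrm _ ((hmemr _).mpr (Or.inl ⟨hsurvΘ, rfl⟩))
    obtain ⟨h0, hh0H, hh0M⟩ := hq2 hact2 (fun b hb => hXM' (hB hb))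
    have hh0HY : h0 ∈ HYs r Y := ⟨hh0H, hss.1 hh0M⟩
    have hHYM' : HYs r Y ⊆ M' := by
      intro w hw
      have hq := hrm _ ((hmemr _).mpr (Or.inr (Or.inr (Or.inr (Or.inl
        ⟨w, hw, h0, hh0HY, rfl⟩)))))
      obtain ⟨b, hb, hbM⟩ := hq (by rintro m rfl; exact fun hc => hc (hHYY hw))
        (by rintro d (rfl | hd); exact hh0M; exact hXM' hd)
      rwa [Set.mem_singleton_iff.mp hb] at hbM
    exact hss.2 (by rw [← Xs_union_HYs r Y]; exact Set.union_subset hXM' hHYM')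
  have hminV : ∀ a0 ∈ PAm r Y, ¬ ∃ M', M' ⊂ Y \ {a0} ∧
      (((ELP.mk A E {r}).union
        (gadget A (litsOf A) Θ (R2G A Y r))).eReduct Θ).redModel (Y \ {a0}) M' := by
    rintro a0 ha0 ⟨M', hss, hrm⟩
    rw [Set.ssubset_def] at hss
    have hHYK : HYs r Y ⊆ Y \ {a0} := fun h hh =>
      ⟨hHYY hh, fun hc => hPAmH a0 ha0 (Set.mem_singleton_iff.mp hc ▸ hHYH hh)⟩
    have hCHM' : ∀ w ∈ Y \ {a0}, w ∉ HYs r Y → w ∈ M' := by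
      intro w hw hwHY
      have hq := hrm _ ((hmemr _).mpr (Or.inr (Or.inr (Or.inl
        ⟨w, ⟨hYA hw.1, hwHY⟩, rfl⟩))))
      obtain ⟨b, hb, hbM⟩ := hq (by rintro m rfl; exact fun hc => hc hw) (by simp)
      rwa [Set.mem_singleton_iff.mp hb] at hbM
    have hHYM' : HYs r Y ⊆ M' := by
      intro h hh
      have hq := hrm _ ((hmemr _).mpr (Or.inr (Or.inr (Or.inr (Or.inr (Or.inl
        ⟨h, hh, a0, ha0, rfl⟩))))))
      have hact' : ∀ m ∈ (insert (Lit.pos a0) {Lit.neg h} : Set (Lit V)),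
          ¬ m.sat (Y \ {a0}) := by
        rintro m (rfl | rfl)
        · exact fun hc => hc.2 rfl
        · exact fun hc => hc (hHYK hh)
      obtain ⟨b, hb, hbM⟩ := hq hact' (by simp)
      rwa [Set.mem_singleton_iff.mp hb] at hbM
    refine hss.2 (fun d hd => ?_)
    by_cases hdH : d ∈ HYs r Y
    · exact hHYM' hdH
    · exact hCHM' d hd hdH
  have hminV2 : (PAH r Y).Nonempty → ¬ ∃ M', M' ⊂ Xs r Y ∪ T2 r Y ∧
      (((ELP.mk A E {r}).union
        (gadget A (litsOf A) Θ (R2G A Y r))).eReduct Θ).redModel (Xs r Y ∪ T2 r Y) M' := by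
    rintro hne ⟨M', hss, hrm⟩
    rw [Set.ssubset_def] at hss
    have hXM' : Xs r Y ⊆ M' := by
      intro w hw
      have hq := hrm _ ((hmemr _).mpr (Or.inr (Or.inr (Or.inl
        ⟨w, ⟨hYA (hXsY hw), hXHY w hw⟩, rfl⟩))))
      obtain ⟨b, hb, hbM⟩ := hq (by rintro m rfl; exact fun hc => hc (Or.inl hw)) (by simp)
      rwa [Set.mem_singleton_iff.mp hb] at hbM
    have hT2M' : T2 r Y ⊆ M' := by
      intro t ht
      have hq := hrm _ ((hmemr _).mpr (Or.inr (Or.inr (Or.inr (Or.inr (Or.inr (Or.inl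
        ⟨hne, t, hT2HY ht, rfl⟩)))))))
      have hact' : ∀ m ∈ (insert (Lit.neg t) (Lit.pos '' Z2 r Y) : Set (Lit V)),
          ¬ m.sat (Xs r Y ∪ T2 r Y) := by
        rintro m (rfl | ⟨z, hz, rfl⟩)
        · exact fun hc => hc (Or.inr ht)
        · exact hV2Z z hz
      obtain ⟨b, hb, hbM⟩ := hq hact' (by simp)
      rwa [Set.mem_singleton_iff.mp hb] at hbM
    exact hss.2 (Set.union_subset hXM' hT2M')
  -- candidate analysis: every answer set of the r-side is a member
  have hcand : ∀ K, K ∈ (((ELP.mk A E {r}).union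
      (gadget A (litsOf A) Θ (R2G A Y r))).eReduct Θ).AS → K ∈ M := by
    rintro K ⟨hKA0, hmod, -⟩
    rw [union_gadget_A] at hKA0
    have hbox : ∀ ℓ : Lit V, ℓ.atom ∈ A → (∀ K' ∈ M, ℓ.sat K') → ℓ.sat K := by
      intro ℓ hA hall
      refine sat_bRule.mp (hmod _ ((hmemr _).mpr (Or.inr (Or.inl ⟨ℓ, ⟨hA, ?_⟩, rfl⟩))))
      rintro ⟨-, K', hK', hviol⟩
      exact hviol (hall K' hK')
    have hKY : K ⊆ Y := by
      intro d hd
      by_contra hdY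
      refine hbox (Lit.neg d) (hKA0 hd) (fun K' hK' hc => hdY (hMsubY K' hK' hc)) hd
    have hstep2 : ∀ y ∈ Y, y ∉ PAm r Y → ((PAH r Y).Nonempty → y ∉ Z2 r Y) → y ∈ K := by
      intro y hy hyPAm hyZ
      refine hbox (Lit.pos y) (hYA hy) ?_
      rintro K' (rfl | ⟨b, hb, rfl⟩ | ⟨hne2, rfl⟩)
      · exact hy
      · exact ⟨hy, fun hc => hyPAm (Set.mem_singleton_iff.mp hc ▸ hb)⟩
      · rw [V2_eq]
        exact ⟨hy, hyZ hne2⟩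
    have hCi : ∀ a' ∈ PAm r Y, ∀ a'' ∈ PAm r Y, a' ≠ a'' → a' ∉ K → a'' ∈ K := by
      intro a' ha' a'' ha'' hne ha'K
      have hq := hmod _ ((hmemr _).mpr (Or.inr (Or.inr (Or.inr (Or.inr (Or.inr (Or.inr (Or.inl
        ⟨a', ha', a'', ha'', hne, rfl⟩))))))))
      rw [sat_constraint] at hq
      by_contra ha''K
      refine hq ⟨by simp, ?_⟩
      rintro m (rfl | rfl)
      · exact ha'K
      · exact ha''K
    have hCA : ∀ h ∈ Z2 r Y, ∀ h' ∈ Z2 r Y, h ≠ h' → h' ∈ K → h ∈ K := by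
      intro h hh h' hh' hne hh'K
      have hq := hmod _ ((hmemr _).mpr (Or.inr (Or.inr (Or.inr (Or.inr (Or.inr (Or.inr (Or.inr (Or.inl
        ⟨h, hh, h', hh', hne, rfl⟩)))))))))
      rw [sat_constraint] at hq
      by_contra hhK
      refine hq ⟨fun d hd => Set.mem_singleton_iff.mp hd ▸ hh'K, ?_⟩
      rintro m rfl
      exact hhK
    have hCB : ∀ a' ∈ PAm r Y, ∀ h ∈ Z2 r Y, a' ∉ K → h ∈ K := by
      intro a' ha' h hh ha'K
      have hq := hmod _ ((hmemr _).mpr (Or.inr (Or.inr (Or.inr (Or.inr (Or.inr (Or.inr (Or.inr (Or.inr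
        ⟨a', ha', h, hh, rfl⟩)))))))))
      rw [sat_constraint] at hq
      by_contra hhK
      refine hq ⟨by simp, ?_⟩
      rintro m (rfl | rfl)
      · exact ha'K
      · exact hhK
    by_cases hZmiss : ∃ h ∈ Z2 r Y, h ∉ K
    · obtain ⟨h0, hh0Z, hh0K⟩ := hZmiss
      have hPAHne : (PAH r Y).Nonempty := by
        by_contra hc
        exact hh0K (hstep2 h0 (hZY hh0Z) (fun hp => hPAmH h0 hp (hZH hh0Z))
          (fun hn => absurd hn hc))
      have hZK : ∀ h' ∈ Z2 r Y, h' ∉ K := by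
        intro h' hh' hc
        by_cases he : h0 = h'
        · exact hh0K (he ▸ hc)
        · exact hh0K (hCA h0 hh0Z h' hh' he hc)
      have hPAmK : PAm r Y ⊆ K := by
        intro a' ha'
        by_contra hc
        exact hh0K (hCB a' ha' h0 hh0Z hc)
      have hKeq : K = Xs r Y ∪ T2 r Y := by
        rw [V2_eq]
        ext d
        constructor
        · intro hd
          exact ⟨hKY hd, fun hz => hZK d hz hd⟩
        · rintro ⟨hdY, hdZ⟩
          by_cases hdp : d ∈ PAm r Y
          · exact hPAmK hdp
          · exact hstep2 d hdY hdp (fun _ => hdZ)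
      rw [hKeq]
      exact hV2M hPAHne
    · push_neg at hZmiss
      by_cases hPAmiss : ∃ a' ∈ PAm r Y, a' ∉ K
      · obtain ⟨a0, ha0, ha0K⟩ := hPAmiss
        have hKeq : K = Y \ {a0} := by
          ext d
          constructor
          · intro hd
            exact ⟨hKY hd, fun hc => ha0K (Set.mem_singleton_iff.mp hc ▸ hd)⟩
          · rintro ⟨hdY, hda0⟩
            by_cases hdp : d ∈ PAm r Y
            · exact hCi a0 ha0 d hdp
                (fun he => hda0 (Set.mem_singleton_iff.mpr he.symm)) ha0K
            · by_cases hdz : d ∈ Z2 r Y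
              · exact hZmiss d hdz
              · exact hstep2 d hdY hdp (fun _ => hdz)
        rw [hKeq]
        exact hVM a0 ha0
      · push_neg at hPAmiss
        have hKeq : K = Y := by
          ext d
          constructor
          · exact fun hd => hKY hd
          · intro hdY
            by_cases hdp : d ∈ PAm r Y
            · exact hPAmiss d hdp
            · by_cases hdz : d ∈ Z2 r Y
              · exact hZmiss d hdz
              · exact hstep2 d hdY hdp (fun _ => hdz)
        rw [hKeq]
        exact hYM
  -- the answer sets of the r-side are exactly the members
  have hASr : (((ELP.mk A E {r}).union
      (gadget A (litsOf A) Θ (R2G A Y r))).eReduct Θ).AS = M := by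
    ext K
    constructor
    · exact hcand K
    · intro hK
      refine ⟨by rw [union_gadget_A]; exact hMsubA K hK, hmodM K hK, ?_⟩
      rcases hK with rfl | ⟨a0, ha0, rfl⟩ | ⟨hne, rfl⟩
      · exact hminY
      · exact hminV a0 ha0
      · exact hminV2 hne
  -- Y is not an answer set of the ∅-side
  have hYe : Y ∉ (((ELP.mk A E (∅ : Set (ERule V))).union
      (gadget A (litsOf A) Θ (R2G A Y r))).eReduct Θ).AS := by
    rintro ⟨-, -, hnom⟩
    refine hnom ⟨Xs r Y, ?_, ?_⟩
    · rw [Set.ssubset_def]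
      obtain ⟨h0, hh0⟩ := hHY
      exact ⟨hXsY, fun hc => (hc (hHYY hh0)).2 (hHYH hh0)⟩
    · intro q hq
      rcases (hmeme q).mp hq with ⟨ℓ, hℓ, rfl⟩ | hG
      · exact redSat_bRule (sat_of_not_thetaOf hℓ.1 hℓ.2 hYM)
      · rcases hG with ⟨w, hw, rfl⟩ | ⟨w, hw, h, hh, rfl⟩ | ⟨h, hh, a', ha', rfl⟩ |
          ⟨hne, t, ht, rfl⟩ | ⟨a', ha', a'', ha'', hnee, rfl⟩ | ⟨h, hh, h', hh', hnee, rfl⟩ |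
          ⟨a', ha', h, hh, rfl⟩
        · intro hactw _
          have hwY : w ∈ Y := by
            by_contra hc
            exact hactw _ rfl hc
          exact ⟨w, rfl, hwY, fun hc => hw.2 ⟨hc, hwY⟩⟩
        · exact redSat_of_posfail (Set.mem_insert _ _) (fun hc => hc.2 (hHYH hh))
        · exact redSat_of_negsat (Set.mem_insert _ _) (hPAmY ha')
        · obtain ⟨a1, ha1⟩ := hne
          have hz : a1 ∈ Z2 r Y := ⟨⟨ha1.2, ha1.1.2⟩, hPAEp a1 ha1.1⟩
          exact redSat_of_negsat (Set.mem_insert_of_mem _ ⟨a1, hz, rfl⟩) (hZY hz)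
        · exact redSat_of_negsat (Set.mem_insert _ _) (hPAmY ha')
        · exact redSat_of_negsat rfl (hZY hh)
        · exact redSat_of_negsat (Set.mem_insert _ _) (hPAmY ha')
  exact gadget_contra hwf heq M Y hYM (R2G A Y r) (R2G_ratoms hYA) hASr hYe


end Stmt12

namespace Stmt12

variable {V : Type}

/-! ### Goal 3, construction R1 (an epistemic witness outside `Y` is needed) -/

def NAs (r : ERule V) (Y : Set V) : Set V := {a | Lit.neg a ∈ r.epos ∧ a ∉ Y}
def Yps (r : ERule V) (Y : Set V) : Set V := Y \ EpS r
def Ws (r : ERule V) (Y : Set V) : Set V := EpS r ∪ NAs r Y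
def R1M (r : ERule V) (Y : Set V) : Set (Set V) := {K | K = Y ∨ K = Ws r Y}

def R1G (A Y : Set V) (r : ERule V) (a₀ : V) : Set (Rule V) :=
  {q | (∃ w ∈ A \ HYs r Y, q = ⟨{w}, ∅, {Lit.neg w}⟩) ∨
       (∃ w ∈ HYs r Y, ∃ h ∈ HYs r Y, q = ⟨{w}, insert h (Xs r Y), {Lit.neg w}⟩) ∨
       (∃ t ∈ HYs r Y, q = ⟨{t}, {a₀}, {Lit.neg t}⟩) ∨
       (∃ c ∈ NAs r Y, ∃ y ∈ Yps r Y, q = ⟨∅, {c, y}, ∅⟩) ∨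
       (∃ c ∈ NAs r Y, ∃ c' ∈ NAs r Y, q = ⟨∅, {c}, {Lit.pos c'}⟩) ∨
       (∃ y ∈ Yps r Y, ∃ y' ∈ Yps r Y, q = ⟨∅, {y}, {Lit.pos y'}⟩) ∨
       (∃ c ∈ NAs r Y, ∃ y ∈ Yps r Y, q = ⟨∅, ∅, {Lit.pos c, Lit.pos y}⟩)}

lemma R1_contra {A : Set V} {E : Set (Lit V)} {r : ERule V}
    (hwf : (ELP.mk A E {r}).wf)
    (heq : ELP.strongELPCWVEq (ELP.mk A E {r}) (ELP.mk A E ∅))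
    {Φ₀ : Set (Lit V)} (hΦ₀E : Φ₀ ⊆ E)
    (hsurv₀ : ∀ ℓ ∈ r.eneg, ℓ ∉ Φ₀)
    {Y : Set V} (hYA : Y ⊆ A)
    (hact : ∀ m ∈ (r.reduct Φ₀).neg, ¬ m.sat Y)
    (hB : r.opos ⊆ Xs r Y)
    (hHY : (HYs r Y).Nonempty)
    {a₀ : V} (ha₀ : a₀ ∈ NAs r Y) :
    False := by
  have hrwf : r.wf A E := hwf.2 r rfl
  have hEA := hwf.1
  have hepE : r.epos ⊆ E := hrwf.2.2.2.1
  have henE : r.eneg ⊆ E := hrwf.2.2.2.2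
  set M : Set (Set V) := R1M r Y with hMdef
  set Θ : Set (Lit V) := thetaOf A M with hΘdef
  have hEpY : EpS r ⊆ Y := by
    intro c hc
    have h := hact ((Lit.pos c).flip) (Or.inr ⟨Lit.pos c, hc, rfl⟩)
    rw [flip_sat, not_not] at h
    exact h
  have hEnY : ∀ c ∈ EnS r, c ∉ Y := by
    intro c hc
    have h := hact ((Lit.neg c).flip) (Or.inr ⟨Lit.neg c, hc, rfl⟩)
    rw [flip_sat, not_not] at h
    exact h
  have hPAEp : ∀ a ∈ PAs r Y, a ∉ EpS r := by
    intro a ha hc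
    have hΦ : Lit.pos a ∈ Φ₀ := by
      by_contra hn
      exact hact (Lit.pos a) (Or.inl (Or.inr ⟨ha.1, hn⟩)) ha.2
    exact hsurv₀ _ hc hΦ
  have hNAEn : ∀ a ∈ NAs r Y, a ∉ EnS r := by
    intro a ha hc
    have hΦ : Lit.neg a ∈ Φ₀ := by
      by_contra hn
      exact hact (Lit.neg a) (Or.inl (Or.inr ⟨ha.1, hn⟩)) ha.2
    exact hsurv₀ _ hc hΦ
  -- handy set facts
  have hHYY : HYs r Y ⊆ Y := Set.inter_subset_right
  have hHYH : HYs r Y ⊆ r.head := Set.inter_subset_left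
  have hXsY : Xs r Y ⊆ Y := Set.diff_subset
  have hXHY : ∀ d ∈ Xs r Y, d ∉ HYs r Y := fun d hd hc => hd.2 hc.1
  have hNAY : ∀ c ∈ NAs r Y, c ∉ Y := fun c hc => hc.2
  have hYpY : Yps r Y ⊆ Y := Set.diff_subset
  have hWsA : Ws r Y ⊆ A := by
    rintro d (hd | hd)
    · exact hYA (hEpY hd)
    · exact hEA _ (hepE hd.1)
  have hEpWs : EpS r ⊆ Ws r Y := Set.subset_union_left
  have hNAWs : NAs r Y ⊆ Ws r Y := Set.subset_union_right
  have hWsY : ∀ d, d ∈ Ws r Y → d ∈ Y → d ∈ EpS r := by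
    rintro d (hd | hd) hdY
    · exact hd
    · exact absurd hdY hd.2
  have hYpWs : ∀ y ∈ Yps r Y, y ∉ Ws r Y := fun y hy hc => hy.2 (hWsY y hc hy.1)
  have ha₀Y : a₀ ∉ Y := ha₀.2
  -- member facts
  have hYM : Y ∈ M := Or.inl rfl
  have hWM : Ws r Y ∈ M := Or.inr rfl
  have hMsubA : ∀ K ∈ M, K ⊆ A := by
    rintro K (rfl | rfl)
    · exact hYA
    · exact hWsA
  have hensat : ∀ m ∈ r.eneg, ∀ K ∈ M, m.sat K := by
    intro m hm K hK
    cases m with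
    | pos c =>
        show c ∈ K
        rcases hK with rfl | rfl
        · exact hEpY hm
        · exact hEpWs hm
    | neg c =>
        show c ∉ K
        rcases hK with rfl | rfl
        · exact hEnY c hm
        · rintro (hc | hc)
          · exact hEnY c hm (hEpY hc)
          · exact hNAEn c hc hm
  have hsurvΘ : ∀ m ∈ r.eneg, m ∉ Θ := by
    rintro m hm ⟨hA, K, hK, hviol⟩
    exact hviol (hensat m hm K hK)
  have hepΘ : r.epos ⊆ Θ := by
    intro m hm
    have hA : m.atom ∈ A := hEA _ (hepE hm)
    cases m with
    | pos a =>
        by_cases haY : a ∈ Y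
        · refine ⟨hA, _, hWM, ?_⟩
          rintro (hc | hc)
          · exact hPAEp a ⟨hm, haY⟩ hc
          · exact hc.2 haY
        · exact ⟨hA, Y, hYM, haY⟩
    | neg a =>
        by_cases haY : a ∈ Y
        · exact ⟨hA, Y, hYM, fun hc => hc haY⟩
        · exact ⟨hA, _, hWM, fun hc => hc (hNAWs ⟨hm, haY⟩)⟩
  have hact2 : ∀ m ∈ (r.reduct Θ).neg, ¬ m.sat Y := by
    rintro m ((h | h) | h)
    · exact hact m (Or.inl (Or.inl h))
    · exact absurd (hepΘ h.1) h.2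
    · exact hact m (Or.inr h)
  have hq2sat : ∀ J : Set V, J ⊆ A → Rule.sat J (r.reduct Θ) := by
    intro J hJA
    rw [reduct_inter hepE]
    exact core_allmodels hwf heq Set.inter_subset_right (cons_thetaOf_inter hEA hYM)
      (fun m hm hc => hsurvΘ m hm hc.1) hJA
  -- rule membership characterizations
  have hmemr : ∀ q : Rule V,
      q ∈ (((ELP.mk A E {r}).union (gadget A (litsOf A) Θ (R1G A Y r a₀))).eReduct Θ).R ↔
      (((∀ ℓ ∈ r.eneg, ℓ ∉ Θ) ∧ q = r.reduct Θ) ∨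
        (∃ ℓ ∈ litsOf A \ Θ, q = bRule ℓ) ∨ q ∈ R1G A Y r a₀) := by
    intro q
    rw [mem_redrules]
    constructor
    · rintro (⟨re, hre, h⟩ | h)
      · rw [Set.mem_singleton_iff] at hre
        subst hre
        exact Or.inl h
      · exact Or.inr h
    · rintro (h | h)
      · exact Or.inl ⟨r, rfl, h⟩
      · exact Or.inr h
  have hmeme : ∀ q : Rule V,
      q ∈ (((ELP.mk A E (∅ : Set (ERule V))).union
        (gadget A (litsOf A) Θ (R1G A Y r a₀))).eReduct Θ).R ↔
      ((∃ ℓ ∈ litsOf A \ Θ, q = bRule ℓ) ∨ q ∈ R1G A Y r a₀) := by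
    intro q
    rw [mem_redrules]
    constructor
    · rintro (⟨re, hre, h⟩ | h)
      · exact absurd hre (Set.notMem_empty re)
      · exact h
    · exact fun h => Or.inr h
  -- members are models
  have hmodM : ∀ K ∈ M,
      (((ELP.mk A E {r}).union (gadget A (litsOf A) Θ (R1G A Y r a₀))).eReduct Θ).model K := by
    intro K hK q hq
    rcases (hmemr q).mp hq with ⟨hsur, rfl⟩ | ⟨ℓ, hℓ, rfl⟩ | hG
    · exact hq2sat K (hMsubA K hK)
    · exact sat_bRule.mpr (sat_of_not_thetaOf hℓ.1 hℓ.2 hK)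
    · rcases hG with ⟨w, hw, rfl⟩ | ⟨w, hw, h, hh, rfl⟩ | ⟨t, ht, rfl⟩ |
        ⟨c, hc, y, hy, rfl⟩ | ⟨c, hc, c', hc', rfl⟩ | ⟨y, hy, y', hy', rfl⟩ |
        ⟨c, hc, y, hy, rfl⟩
      · exact sat_select rfl
      · exact sat_select rfl
      · exact sat_select rfl
      · rw [sat_constraint]
        rintro ⟨hsub, -⟩
        rcases hK with rfl | rfl
        · exact hNAY c hc (hsub (Or.inl rfl))
        · exact hYpWs y hy (hsub (Or.inr rfl))
      · rw [sat_constraint]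
        rintro ⟨hsub, hall⟩
        rcases hK with rfl | rfl
        · exact hNAY c hc (hsub rfl)
        · exact hall _ rfl (hNAWs hc')
      · rw [sat_constraint]
        rintro ⟨hsub, hall⟩
        rcases hK with rfl | rfl
        · exact hall _ rfl (hYpY hy')
        · exact hYpWs y hy (hsub rfl)
      · rw [sat_constraint]
        rintro ⟨-, hall⟩
        rcases hK with rfl | rfl
        · exact hall _ (Or.inr rfl) (hYpY hy)
        · exact hall _ (Or.inl rfl) (hNAWs hc)
  -- minimality of Y on the r-side
  have hminY : ¬ ∃ M', M' ⊂ Y ∧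
      (((ELP.mk A E {r}).union (gadget A (litsOf A) Θ (R1G A Y r a₀))).eReduct Θ).redModel Y M' := by
    rintro ⟨M', hss, hrm⟩
    rw [Set.ssubset_def] at hss
    have hXM' : Xs r Y ⊆ M' := by
      intro w hw
      have hq := hrm _ ((hmemr _).mpr (Or.inr (Or.inr (Or.inl
        ⟨w, ⟨hYA (hXsY hw), hXHY w hw⟩, rfl⟩))))
      obtain ⟨b, hb, hbM⟩ := hq (by rintro m rfl; exact fun hc => hc (hXsY hw)) (by simp)
      rwa [Set.mem_singleton_iff.mp hb] at hbM
    have hq2 := hrm _ ((hmemr _).mpr (Or.inl ⟨hsurvΘ, rfl⟩))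
    obtain ⟨h0, hh0H, hh0M⟩ := hq2 hact2 (fun b hb => hXM' (hB hb))
    have hh0HY : h0 ∈ HYs r Y := ⟨hh0H, hss.1 hh0M⟩
    have hHYM' : HYs r Y ⊆ M' := by
      intro w hw
      have hq := hrm _ ((hmemr _).mpr (Or.inr (Or.inr (Or.inr (Or.inl
        ⟨w, hw, h0, hh0HY, rfl⟩)))))
      obtain ⟨b, hb, hbM⟩ := hq (by rintro m rfl; exact fun hc => hc (hHYY hw))
        (by rintro d (rfl | hd); exact hh0M; exact hXM' hd)
      rwa [Set.mem_singleton_iff.mp hb] at hbM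
    exact hss.2 (by rw [← Xs_union_HYs r Y]; exact Set.union_subset hXM' hHYM')
  -- minimality of Ws on the r-side
  have hminW : ¬ ∃ M', M' ⊂ Ws r Y ∧
      (((ELP.mk A E {r}).union
        (gadget A (litsOf A) Θ (R1G A Y r a₀))).eReduct Θ).redModel (Ws r Y) M' := by
    rintro ⟨M', hss, hrm⟩
    rw [Set.ssubset_def] at hss
    have hCHM' : ∀ w ∈ Ws r Y, w ∉ HYs r Y → w ∈ M' := by
      intro w hw hwHY
      have hq := hrm _ ((hmemr _).mpr (Or.inr (Or.inr (Or.inl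
        ⟨w, ⟨hWsA hw, hwHY⟩, rfl⟩))))
      obtain ⟨b, hb, hbM⟩ := hq (by rintro m rfl; exact fun hc => hc hw) (by simp)
      rwa [Set.mem_singleton_iff.mp hb] at hbM
    have ha₀M' : a₀ ∈ M' :=
      hCHM' a₀ (hNAWs ha₀) (fun hc => ha₀Y (hHYY hc))
    have hHYM' : ∀ t ∈ HYs r Y, t ∈ Ws r Y → t ∈ M' := by
      intro t ht htW
      have hq := hrm _ ((hmemr _).mpr (Or.inr (Or.inr (Or.inr (Or.inr (Or.inl
        ⟨t, ht, rfl⟩))))))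
      obtain ⟨b, hb, hbM⟩ := hq (by rintro m rfl; exact fun hc => hc htW)
        (by intro d hd; rwa [Set.mem_singleton_iff.mp hd])
      rwa [Set.mem_singleton_iff.mp hb] at hbM
    refine hss.2 (fun d hd => ?_)
    by_cases hdH : d ∈ HYs r Y
    · exact hHYM' d hdH hd
    · exact hCHM' d hd hdH
  -- candidate analysis
  have hcand : ∀ K, K ∈ (((ELP.mk A E {r}).union
      (gadget A (litsOf A) Θ (R1G A Y r a₀))).eReduct Θ).AS → K ∈ M := by
    rintro K ⟨hKA0, hmod, -⟩
    rw [union_gadget_A] at hKA0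
    have hbox : ∀ ℓ : Lit V, ℓ.atom ∈ A → (∀ K' ∈ M, ℓ.sat K') → ℓ.sat K := by
      intro ℓ hA hall
      refine sat_bRule.mp (hmod _ ((hmemr _).mpr (Or.inr (Or.inl ⟨ℓ, ⟨hA, ?_⟩, rfl⟩))))
      rintro ⟨-, K', hK', hviol⟩
      exact hviol (hall K' hK')
    have hKYW : ∀ d ∈ K, d ∈ Y ∨ d ∈ Ws r Y := by
      intro d hd
      by_contra hdc
      push_neg at hdc
      refine hbox (Lit.neg d) (hKA0 hd) ?_ hd
      rintro K' (rfl | rfl)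
      · exact hdc.1
      · exact hdc.2
    have hEpK : EpS r ⊆ K := by
      intro c hc
      refine hbox (Lit.pos c) (hYA (hEpY hc)) ?_
      rintro K' (rfl | rfl)
      · exact hEpY hc
      · exact hEpWs hc
    have hcon_a : ∀ c ∈ NAs r Y, ∀ y ∈ Yps r Y, c ∈ K → y ∉ K := by
      intro c hc y hy hcK hyK
      have hq := hmod _ ((hmemr _).mpr (Or.inr (Or.inr (Or.inr (Or.inr (Or.inr (Or.inl
        ⟨c, hc, y, hy, rfl⟩)))))))
      rw [sat_constraint] at hq
      refine hq ⟨?_, by simp⟩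
      rintro d (rfl | rfl)
      · exact hcK
      · exact hyK
    have hcon_b : ∀ c ∈ NAs r Y, ∀ c' ∈ NAs r Y, c ∈ K → c' ∈ K := by
      intro c hc c' hc' hcK
      have hq := hmod _ ((hmemr _).mpr (Or.inr (Or.inr (Or.inr (Or.inr (Or.inr (Or.inr (Or.inl
        ⟨c, hc, c', hc', rfl⟩))))))))
      rw [sat_constraint] at hq
      by_contra hc'K
      refine hq ⟨fun d hd => Set.mem_singleton_iff.mp hd ▸ hcK, ?_⟩
      rintro m rfl
      exact hc'K
    have hcon_d : ∀ c ∈ NAs r Y, ∀ y ∈ Yps r Y, c ∉ K → y ∈ K := by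
      intro c hc y hy hcK
      have hq := hmod _ ((hmemr _).mpr (Or.inr (Or.inr (Or.inr (Or.inr (Or.inr (Or.inr (Or.inr (Or.inr
        ⟨c, hc, y, hy, rfl⟩)))))))))
      rw [sat_constraint] at hq
      by_contra hyK
      refine hq ⟨by simp, ?_⟩
      rintro m (rfl | rfl)
      · exact hcK
      · exact hyK
    by_cases hNAK : ∃ c ∈ NAs r Y, c ∈ K
    · obtain ⟨c0, hc0, hc0K⟩ := hNAK
      have hKeq : K = Ws r Y := by
        ext d
        constructor
        · intro hd
          rcases hKYW d hd with hdY | hdW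
          · left
            by_contra hdEp
            exact hcon_a c0 hc0 d ⟨hdY, hdEp⟩ hc0K hd
          · exact hdW
        · rintro (hd | hd)
          · exact hEpK hd
          · exact hcon_b c0 hc0 d hd hc0K
      rw [hKeq]
      exact hWM
    · push_neg at hNAK
      have hKeq : K = Y := by
        ext d
        constructor
        · intro hd
          rcases hKYW d hd with hdY | hdW
          · exact hdY
          · rcases hdW with hdW | hdW
            · exact hEpY hdW
            · exact absurd hd (hNAK d hdW)
        · intro hdY
          by_cases hdEp : d ∈ EpS r
          · exact hEpK hdEp
          · exact hcon_d a₀ ha₀ d ⟨hdY, hdEp⟩ (hNAK a₀ ha₀)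
      rw [hKeq]
      exact hYM
  have hASr : (((ELP.mk A E {r}).union
      (gadget A (litsOf A) Θ (R1G A Y r a₀))).eReduct Θ).AS = M := by
    ext K
    constructor
    · exact hcand K
    · intro hK
      refine ⟨by rw [union_gadget_A]; exact hMsubA K hK, hmodM K hK, ?_⟩
      rcases hK with rfl | rfl
      · exact hminY
      · exact hminW
  have hYe : Y ∉ (((ELP.mk A E (∅ : Set (ERule V))).union
      (gadget A (litsOf A) Θ (R1G A Y r a₀))).eReduct Θ).AS := by
    rintro ⟨-, -, hnom⟩
    refine hnom ⟨Xs r Y, ?_, ?_⟩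
    · rw [Set.ssubset_def]
      obtain ⟨h0, hh0⟩ := hHY
      exact ⟨hXsY, fun hc => (hc (hHYY hh0)).2 (hHYH hh0)⟩
    · intro q hq
      rcases (hmeme q).mp hq with ⟨ℓ, hℓ, rfl⟩ | hG
      · exact redSat_bRule (sat_of_not_thetaOf hℓ.1 hℓ.2 hYM)
      · rcases hG with ⟨w, hw, rfl⟩ | ⟨w, hw, h, hh, rfl⟩ | ⟨t, ht, rfl⟩ |
          ⟨c, hc, y, hy, rfl⟩ | ⟨c, hc, c', hc', rfl⟩ | ⟨y, hy, y', hy', rfl⟩ |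
          ⟨c, hc, y, hy, rfl⟩
        · intro hactw _
          have hwY : w ∈ Y := by
            by_contra hcc
            exact hactw _ rfl hcc
          exact ⟨w, rfl, hwY, fun hcc => hw.2 ⟨hcc, hwY⟩⟩
        · exact redSat_of_posfail (Set.mem_insert _ _) (fun hcc => hcc.2 (hHYH hh))
        · exact redSat_of_posfail rfl (fun hcc => ha₀Y (hXsY hcc))
        · exact redSat_of_posfail (show c ∈ ({c, y} : Set V) from Or.inl rfl)
            (fun hcc => hNAY c hc (hXsY hcc))
        · exact redSat_of_posfail rfl (fun hcc => hNAY c hc (hXsY hcc))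
        · exact redSat_of_negsat rfl (hYpY hy')
        · exact redSat_of_negsat (show Lit.pos y ∈ ({Lit.pos c, Lit.pos y} : Set (Lit V))
            from Or.inr rfl) (hYpY hy)
  refine gadget_contra hwf heq M Y hYM (R1G A Y r a₀) ?_ hASr hYe
  -- ratoms of R1G
  rintro g (⟨w, hw, rfl⟩ | ⟨w, hw, h, hh, rfl⟩ | ⟨t, ht, rfl⟩ |
    ⟨c, hc, y, hy, rfl⟩ | ⟨c, hc, c', hc', rfl⟩ | ⟨y, hy, y', hy', rfl⟩ |
    ⟨c, hc, y, hy, rfl⟩)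
  · exact ⟨by simpa using hw.1, by simp, by simpa [Lit.atom] using hw.1⟩
  · refine ⟨by simpa using hYA (hHYY hw), ?_, by simpa [Lit.atom] using hYA (hHYY hw)⟩
    intro d hd
    rcases hd with rfl | hd
    · exact hYA (hHYY hh)
    · exact hYA (hXsY hd)
  · refine ⟨by simpa using hYA (hHYY ht), ?_, by simpa [Lit.atom] using hYA (hHYY ht)⟩
    intro d hd
    rw [Set.mem_singleton_iff.mp hd]
    exact hWsA (hNAWs ha₀)
  · refine ⟨by simp, ?_, by simp⟩
    rintro d (rfl | rfl)
    · exact hWsA (hNAWs hc)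
    · exact hYA (hYpY hy)
  · refine ⟨by simp, ?_, ?_⟩
    · rintro d rfl
      exact hWsA (hNAWs hc)
    · rintro ℓ rfl
      exact hWsA (hNAWs hc')
  · refine ⟨by simp, ?_, ?_⟩
    · rintro d rfl
      exact hYA (hYpY hy)
    · rintro ℓ rfl
      exact hYA (hYpY hy')
  · refine ⟨by simp, by simp, ?_⟩
    rintro ℓ (rfl | rfl)
    · exact hWsA (hNAWs hc)
    · exact hYA (hYpY hy)

end Stmt12

namespace Stmt12

variable {V : Type}

lemma mp_dir {A : Set V} {E : Set (Lit V)} {r : ERule V}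
    (hwf : (ELP.mk A E {r}).wf)
    (heq : ELP.strongELPCWVEq (ELP.mk A E {r}) (ELP.mk A E ∅)) :
    ∀ Φ ⊆ E, consistentGuess E Φ →
      (ELP.mk A E {r}).SEfun Φ = {p : Set V × Set V | p.1 ⊆ p.2 ∧ p.2 ⊆ A} := by
  intro Φ hΦE hcons
  ext p
  constructor
  · rintro ⟨-, hSE⟩
    exact ⟨hSE.1, hSE.2.1⟩
  · rintro ⟨h12, h2A⟩
    refine ⟨core_realizable hwf heq hΦE hcons, h12, h2A, ?_, ?_⟩
    · rintro q ⟨re, hre, hsur, rfl⟩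
      rw [Set.mem_singleton_iff] at hre
      rw [hre] at hsur ⊢
      exact core_allmodels hwf heq hΦE hcons hsur h2A
    · rintro q ⟨re, hre, hsur, rfl⟩
      rw [Set.mem_singleton_iff] at hre
      rw [hre] at hsur ⊢
      by_contra hred
      unfold Rule.redSat at hred
      push_neg at hred
      obtain ⟨hactY, hpos, hhead⟩ := hred
      have hBX : r.opos ⊆ Xs r p.2 :=
        fun b hb => ⟨h12 (hpos hb), fun hbH => hhead b hbH (hpos hb)⟩
      have hHY : (HYs r p.2).Nonempty := by
        obtain ⟨a, ha, haY⟩ := core_allmodels hwf heq hΦE hcons hsur h2A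
          ⟨fun b hb => h12 (hpos hb), hactY⟩
        exact ⟨a, ha, haY⟩
      by_cases hNA : ∃ a₀, a₀ ∈ NAs r p.2
      · obtain ⟨a₀, ha₀⟩ := hNA
        exact R1_contra hwf heq hΦE hsur h2A hactY hBX hHY ha₀
      · push_neg at hNA
        refine R2_contra hwf heq hΦE hsur h2A hactY hBX hHY ?_
        intro a hm
        by_contra haY
        exact hNA a ⟨hm, haY⟩

end Stmt12


/-- An ELP rule `r` is tautological (the single-rule ELP is strongly
equivalent to the empty program) iff `𝒮ℰ_{P_r}(Φ) = 𝒮_𝒜` for every consistent guess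
`Φ ⊆ ℰ`, where `𝒮_𝒜` is the set of all pairs `(X,Y)` with `X ⊆ Y ⊆ 𝒜`. -/
theorem stmt12 {V : Type} (A : Set V) (E : Set (Lit V)) (r : ERule V)
    (hwf : (ELP.mk A E {r}).wf) :
    ELP.strongELPCWVEq (ELP.mk A E {r}) (ELP.mk A E ∅) ↔
      ∀ Φ ⊆ E, consistentGuess E Φ →
        (ELP.mk A E {r}).SEfun Φ = {p : Set V × Set V | p.1 ⊆ p.2 ∧ p.2 ⊆ A} :=
  ⟨fun heq => Stmt12.mp_dir hwf heq, fun hSE => Stmt12.mpr_dir hwf hSE⟩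
end
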